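/- arXiv:1803.03934 — 6 statements merged into one kernel-verified Lean document; each statement's English description precedes it below -/
import Mathlib

section
/- Let 𝒳 be a measurable space, X = (X₁,…,Xₙ) a vector of independent 𝒳-valued random variables, and f : 𝒳ⁿ → ℝ bounded measurable with M(f) ≤ a/n for some a > 0. Then the variance of f(X) satisfies σ²(f) ≤ a²/(4n). -/
open MeasureTheory ProbabilityTheory

/-- Partial difference operator `D^k_{y,y'} f (x)`. -/
noncomputable def partialDiff {𝒳 : Type*} {n : ℕ} (f : (Fin n → 𝒳) → ℝ) (k : Fin n)
    (y y' : 𝒳) (x : Fin n → 𝒳) : ℝ :=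
  f (Function.update x k y) - f (Function.update x k y')

/-- The seminorm `M(f) = max_k sup_{x,y,y'} D^k_{y,y'} f(x)`. -/
noncomputable def Msem {𝒳 : Type*} {n : ℕ} (f : (Fin n → 𝒳) → ℝ) : ℝ :=
  ⨆ k : Fin n, ⨆ x : Fin n → 𝒳, ⨆ y : 𝒳, ⨆ y' : 𝒳, partialDiff f k y y' x

/-- The seminorm `J(f) = n · max_{l ≠ k} sup_{x,z,z',y,y'} D^l_{z,z'} D^k_{y,y'} f(x)`. -/
noncomputable def Jsem {𝒳 : Type*} {n : ℕ} (f : (Fin n → 𝒳) → ℝ) : ℝ :=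
  n * ⨆ k : Fin n, ⨆ l : Fin n, ⨆ _ : l ≠ k, ⨆ x : Fin n → 𝒳, ⨆ z : 𝒳, ⨆ z' : 𝒳,
      ⨆ y : 𝒳, ⨆ y' : 𝒳, partialDiff (partialDiff f k y y') l z z' x

section Aux

variable {𝒳 : Type*} [MeasurableSpace 𝒳] [Nonempty 𝒳]

/-- Every partial difference is bounded by `Msem f`, provided `f` is bounded. -/
lemma partialDiff_le_Msem {n : ℕ} (f : (Fin n → 𝒳) → ℝ) (C : ℝ) (hC : ∀ x, |f x| ≤ C)
    (k : Fin n) (x : Fin n → 𝒳) (y y' : 𝒳) : partialDiff f k y y' x ≤ Msem f := by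
  have hb : ∀ (k : Fin n) (x : Fin n → 𝒳) (y y' : 𝒳), partialDiff f k y y' x ≤ 2 * C := by
    intro k x y y'
    have h1 := abs_le.1 (hC (Function.update x k y))
    have h2 := abs_le.1 (hC (Function.update x k y'))
    unfold partialDiff
    linarith [h1.2, h2.1]
  have hbd4 : BddAbove (Set.range fun y' : 𝒳 => partialDiff f k y y' x) := by
    refine ⟨2 * C, ?_⟩
    rintro _ ⟨y', rfl⟩
    exact hb k x y y'
  have hbd3 : BddAbove (Set.range fun y : 𝒳 => ⨆ y' : 𝒳, partialDiff f k y y' x) := by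
    refine ⟨2 * C, ?_⟩
    rintro _ ⟨y, rfl⟩
    exact ciSup_le fun y' => hb k x y y'
  have hbd2 : BddAbove (Set.range fun x : Fin n → 𝒳 =>
      ⨆ y : 𝒳, ⨆ y' : 𝒳, partialDiff f k y y' x) := by
    refine ⟨2 * C, ?_⟩
    rintro _ ⟨x, rfl⟩
    exact ciSup_le fun y => ciSup_le fun y' => hb k x y y'
  have hbd1 : BddAbove (Set.range fun k : Fin n =>
      ⨆ x : Fin n → 𝒳, ⨆ y : 𝒳, ⨆ y' : 𝒳, partialDiff f k y y' x) := by
    refine ⟨2 * C, ?_⟩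
    rintro _ ⟨k, rfl⟩
    exact ciSup_le fun x => ciSup_le fun y => ciSup_le fun y' => hb k x y y'
  have h4 : partialDiff f k y y' x ≤ ⨆ y' : 𝒳, partialDiff f k y y' x :=
    le_ciSup hbd4 y'
  have h3 : (⨆ y' : 𝒳, partialDiff f k y y' x) ≤ ⨆ y : 𝒳, ⨆ y' : 𝒳, partialDiff f k y y' x :=
    le_ciSup (f := fun y : 𝒳 => ⨆ y' : 𝒳, partialDiff f k y y' x) hbd3 y
  have h2 : (⨆ y : 𝒳, ⨆ y' : 𝒳, partialDiff f k y y' x)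
      ≤ ⨆ x : Fin n → 𝒳, ⨆ y : 𝒳, ⨆ y' : 𝒳, partialDiff f k y y' x :=
    le_ciSup (f := fun x : Fin n → 𝒳 => ⨆ y : 𝒳, ⨆ y' : 𝒳, partialDiff f k y y' x) hbd2 x
  have h1 : (⨆ x : Fin n → 𝒳, ⨆ y : 𝒳, ⨆ y' : 𝒳, partialDiff f k y y' x) ≤ Msem f :=
    le_ciSup (f := fun k : Fin n =>
      ⨆ x : Fin n → 𝒳, ⨆ y : 𝒳, ⨆ y' : 𝒳, partialDiff f k y y' x) hbd1 k
  exact h4.trans (h3.trans (h2.trans h1))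

lemma measurable_finCons {n : ℕ} :
    Measurable fun p : 𝒳 × (Fin n → 𝒳) => (Fin.cons p.1 p.2 : Fin (n + 1) → 𝒳) := by
  apply measurable_pi_iff.mpr
  intro i
  induction i using Fin.cases with
  | zero => simpa using measurable_fst
  | succ j => simpa [Function.comp_def] using (measurable_pi_apply j).comp measurable_snd

/-- Core induction: if every partial difference of `f` is at most `c`, then
`Var f ≤ n * (c^2 / 4)`. -/
lemma variance_le_of_partialDiff_le :
    ∀ (n : ℕ) (μ : Fin n → Measure 𝒳), (∀ i, IsProbabilityMeasure (μ i)) →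
    ∀ (f : (Fin n → 𝒳) → ℝ), Measurable f →
    ∀ C : ℝ, (∀ x, |f x| ≤ C) →
    ∀ c : ℝ, 0 ≤ c → (∀ (k : Fin n) (x : Fin n → 𝒳) (y y' : 𝒳), partialDiff f k y y' x ≤ c) →
    variance f (Measure.pi μ) ≤ n * (c ^ 2 / 4) := by
  intro n
  induction n with
  | zero =>
    intro μ hμ f hf C hC c hc hd
    haveI := hμ
    haveI : IsProbabilityMeasure (Measure.pi μ) := by infer_instance
    have hconst : f = fun _ => f (fun i => i.elim0) := by
      funext x; exact congrArg f (Subsingleton.elim _ _)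
    have := variance_le_sq_of_bounded (μ := Measure.pi μ) (X := f)
      (a := f (fun i => i.elim0)) (b := f (fun i => i.elim0))
      (Filter.Eventually.of_forall fun x => by
        rw [hconst]; exact ⟨le_refl _, le_refl _⟩) hf.aemeasurable
    simpa using this
  | succ n ih =>
    intro μ hμ f hf C hC c hc hd
    haveI := hμ
    haveI : IsProbabilityMeasure (Measure.pi μ) := by infer_instance
    set ρ : Measure 𝒳 := μ 0 with hρ
    set π : Measure (Fin n → 𝒳) := Measure.pi fun j => μ ((0 : Fin (n + 1)).succAbove j) with hπ
    haveI : IsProbabilityMeasure π := by infer_instance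
    haveI : IsProbabilityMeasure ρ := hμ 0
    haveI : IsProbabilityMeasure (ρ.prod π) := by infer_instance
    set F : 𝒳 × (Fin n → 𝒳) → ℝ := fun p => f (Fin.cons p.1 p.2) with hF
    have hFm : Measurable F := hf.comp measurable_finCons
    have hFbd : ∀ p, |F p| ≤ C := fun p => hC _
    -- transfer integrals from the pi measure to the product measure
    have hmp := (measurePreserving_piFinSuccAbove μ 0).symm
    have hsymm : ∀ p : 𝒳 × (Fin n → 𝒳),
        (MeasurableEquiv.piFinSuccAbove (fun _ : Fin (n + 1) => 𝒳) 0).symm p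
          = Fin.cons p.1 p.2 := by
      intro p
      simp [MeasurableEquiv.piFinSuccAbove_symm_apply, Fin.insertNth_zero', Fin.consEquiv]
    have hint : ∀ g : (Fin (n + 1) → 𝒳) → ℝ,
        ∫ x, g x ∂Measure.pi μ = ∫ p, g (Fin.cons p.1 p.2) ∂(ρ.prod π) := by
      intro g
      rw [← MeasurePreserving.integral_comp hmp
        (MeasurableEquiv.measurableEmbedding _) g]
      refine integral_congr_ae (Filter.Eventually.of_forall fun p => ?_)
      exact congrArg g (hsymm p)

    -- integrability facts
    have hFint : Integrable F (ρ.prod π) :=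
      (integrable_const C).mono' hFm.aestronglyMeasurable
        (Filter.Eventually.of_forall fun p => by simpa using hFbd p)
    have hFsqint : Integrable (fun p => F p ^ 2) (ρ.prod π) :=
      (integrable_const (C ^ 2)).mono' (hFm.pow_const 2).aestronglyMeasurable
        (Filter.Eventually.of_forall fun p => by
          rw [Real.norm_eq_abs, abs_pow]
          exact pow_le_pow_left₀ (abs_nonneg _) (hFbd p) 2)
    set g : (Fin n → 𝒳) → ℝ := fun t => ∫ s, F (s, t) ∂ρ with hg
    have hgm : Measurable g := hFm.stronglyMeasurable.integral_prod_left'.measurable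
    have hgbd : ∀ t, |g t| ≤ C := by
      intro t
      rw [← Real.norm_eq_abs]
      calc ‖∫ s, F (s, t) ∂ρ‖ ≤ C * (ρ Set.univ).toReal :=
            norm_integral_le_of_norm_le_const
              (Filter.Eventually.of_forall fun s => by simpa using hFbd (s, t))
        _ = C := by simp
    -- the conditional slice integrability
    have hslice : ∀ t : Fin n → 𝒳, Integrable (fun s => F (s, t)) ρ := fun t =>
      (integrable_const C).mono' (hFm.comp (measurable_id.prodMk measurable_const)
        ).aestronglyMeasurable
        (Filter.Eventually.of_forall fun s => by simpa using hFbd (s, t))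
    have hslicesq : ∀ t : Fin n → 𝒳, Integrable (fun s => F (s, t) ^ 2) ρ := fun t =>
      (integrable_const (C ^ 2)).mono' (((hFm.comp
        (measurable_id.prodMk measurable_const)).pow_const 2)).aestronglyMeasurable
        (Filter.Eventually.of_forall fun s => by
          rw [Real.norm_eq_abs, abs_pow]
          exact pow_le_pow_left₀ (abs_nonneg _) (hFbd (s, t)) 2)
    -- key pointwise bound: conditional variance at most c^2/4
    have hcond : ∀ t : Fin n → 𝒳, ∫ s, F (s, t) ^ 2 ∂ρ ≤ c ^ 2 / 4 + g t ^ 2 := by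
      intro t
      set h : 𝒳 → ℝ := fun s => F (s, t) with hh
      have hhm : Measurable h := hFm.comp (measurable_id.prodMk measurable_const)
      have hbdd : BddBelow (Set.range h) := ⟨-C, by
        rintro _ ⟨s, rfl⟩; exact (abs_le.1 (hFbd (s, t))).1⟩
      set A : ℝ := ⨅ s, h s with hA
      have hosc : ∀ s s' : 𝒳, h s - h s' ≤ c := by
        intro s s'
        have := hd 0 (Fin.cons s' t) s s'
        unfold partialDiff at this
        rwa [Fin.update_cons_zero, Function.update_eq_self_iff.2 (by simp)] at this
      have hlow : ∀ s, A ≤ h s := fun s => ciInf_le hbdd s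
      have hhigh : ∀ s, h s ≤ A + c := by
        intro s
        have : h s - c ≤ A := le_ciInf fun s' => by linarith [hosc s s']
        linarith
      have hmem : ∀ᵐ s ∂ρ, h s ∈ Set.Icc A (A + c) :=
        Filter.Eventually.of_forall fun s => ⟨hlow s, hhigh s⟩
      have hvar := variance_le_sq_of_bounded hmem hhm.aemeasurable
      have hmem2 : MemLp h 2 ρ :=
        memLp_of_bounded hmem hhm.aestronglyMeasurable 2
      rw [variance_eq_sub hmem2] at hvar
      have hveq : ρ[h ^ 2] = ∫ s, h s ^ 2 ∂ρ := by
        apply integral_congr_ae; filter_upwards with s; simp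
      rw [hveq] at hvar
      have : (A + c - A) / 2 = c / 2 := by ring
      rw [this] at hvar
      have hgt : ρ[h] = g t := rfl
      rw [hgt] at hvar
      have : (c / 2) ^ 2 = c ^ 2 / 4 := by ring
      linarith [hvar, this ▸ hvar]
    -- partial differences of g are at most c
    have hgd : ∀ (k : Fin n) (t : Fin n → 𝒳) (z z' : 𝒳), partialDiff g k z z' t ≤ c := by
      intro k t z z'
      unfold partialDiff
      have h1 : g (Function.update t k z) - g (Function.update t k z')
          = ∫ s, (F (s, Function.update t k z) - F (s, Function.update t k z')) ∂ρ := by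
        rw [integral_sub (hslice _) (hslice _)]
      rw [h1]
      calc ∫ s, (F (s, Function.update t k z) - F (s, Function.update t k z')) ∂ρ
          ≤ ∫ _, c ∂ρ := by
            apply integral_mono ((hslice _).sub (hslice _)) (integrable_const c)
            intro s
            have hkey := hd k.succ (Fin.cons s t) z z'
            unfold partialDiff at hkey
            show F (s, Function.update t k z) - F (s, Function.update t k z') ≤ c
            simp only [hF]
            rw [Fin.cons_update, Fin.cons_update]
            exact hkey
        _ = c := by simp
    -- assemble
    have hfmem : MemLp f 2 (Measure.pi μ) :=
      memLp_of_bounded (Filter.Eventually.of_forall fun x => ⟨(abs_le.1 (hC x)).1,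
        (abs_le.1 (hC x)).2⟩) hf.aestronglyMeasurable 2
    have hgmem : MemLp g 2 π :=
      memLp_of_bounded (Filter.Eventually.of_forall fun t => ⟨(abs_le.1 (hgbd t)).1,
        (abs_le.1 (hgbd t)).2⟩) hgm.aestronglyMeasurable 2
    rw [variance_eq_sub hfmem]
    have hsq : (Measure.pi μ)[f ^ 2] = ∫ x, f x ^ 2 ∂Measure.pi μ := by
      apply integral_congr_ae; filter_upwards with x; simp
    rw [hsq]
    -- rewrite integrals via Fubini
    have e1 : ∫ x, f x ∂Measure.pi μ = ∫ t, g t ∂π := by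
      rw [hint f, integral_prod_symm _ hFint]
    have e2 : ∫ x, f x ^ 2 ∂Measure.pi μ = ∫ t, ∫ s, F (s, t) ^ 2 ∂ρ ∂π := by
      rw [hint (fun x => f x ^ 2)]
      exact integral_prod_symm _ hFsqint
    rw [e1, e2]
    -- integrability of the iterated integrals
    have hgsqint : Integrable (fun t => g t ^ 2) π :=
      (integrable_const (C ^ 2)).mono' ((hgm.pow_const 2)).aestronglyMeasurable
        (Filter.Eventually.of_forall fun t => by
          rw [Real.norm_eq_abs, abs_pow]
          exact pow_le_pow_left₀ (abs_nonneg _) (hgbd t) 2)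
    have hIin : Integrable (fun t => ∫ s, F (s, t) ^ 2 ∂ρ) π :=
      (integrable_const (C ^ 2)).mono'
        ((hFm.pow_const 2).stronglyMeasurable.integral_prod_left').aestronglyMeasurable
        (Filter.Eventually.of_forall fun t => by
          rw [Real.norm_eq_abs, abs_of_nonneg (integral_nonneg fun s => sq_nonneg _)]
          calc ∫ s, F (s, t) ^ 2 ∂ρ ≤ ∫ _, C ^ 2 ∂ρ := by
                apply integral_mono (hslicesq t) (integrable_const _)
                intro s
                show F (s, t) ^ 2 ≤ C ^ 2
                rw [← sq_abs]
                exact pow_le_pow_left₀ (abs_nonneg _) (hFbd (s, t)) 2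
            _ = C ^ 2 := by simp)
    have step1 : ∫ t, ∫ s, F (s, t) ^ 2 ∂ρ ∂π ≤ ∫ t, (c ^ 2 / 4 + g t ^ 2) ∂π := by
      apply integral_mono hIin ((integrable_const _).add hgsqint) hcond
    have step2 : ∫ t, (c ^ 2 / 4 + g t ^ 2) ∂π = c ^ 2 / 4 + ∫ t, g t ^ 2 ∂π := by
      rw [integral_add (integrable_const _) hgsqint]; simp
    have hvarg := ih (fun j => μ ((0 : Fin (n + 1)).succAbove j)) (fun j => hμ _)
      g hgm C hgbd c hc hgd
    rw [variance_eq_sub hgmem] at hvarg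
    have hgsqeq : π[g ^ 2] = ∫ t, g t ^ 2 ∂π := by
      apply integral_congr_ae; filter_upwards with t; simp
    rw [hgsqeq] at hvarg
    push_cast
    linarith [step1, step2, hvarg]

end Aux

/-- A priori variance bound: if `M(f) ≤ a/n` then `σ²(f) ≤ a²/(4n)`. -/
theorem apriori_variance_bound {𝒳 : Type*} [MeasurableSpace 𝒳] [Nonempty 𝒳] {n : ℕ}
    (hn : 0 < n) (μ : Fin n → Measure 𝒳) [∀ i, IsProbabilityMeasure (μ i)]
    (f : (Fin n → 𝒳) → ℝ) (hf : Measurable f) (hbd : ∃ C, ∀ x, |f x| ≤ C)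
    (a : ℝ) (ha : 0 < a) (hM : Msem f ≤ a / n) :
    variance f (Measure.pi μ) ≤ a ^ 2 / (4 * n) := by
  obtain ⟨C, hC⟩ := hbd
  have hnR : (0:ℝ) < n := by exact_mod_cast hn
  have hc : (0:ℝ) ≤ a / n := le_of_lt (div_pos ha hnR)
  have hd : ∀ (k : Fin n) (x : Fin n → 𝒳) (y y' : 𝒳), partialDiff f k y y' x ≤ a / n :=
    fun k x y y' => (partialDiff_le_Msem f C hC k x y y').trans hM
  have := variance_le_of_partialDiff_le n μ (fun i => inferInstance) f hf C hC (a / n) hc hd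
  calc variance f (Measure.pi μ) ≤ n * ((a / n) ^ 2 / 4) := this
    _ = a ^ 2 / (4 * n) := by field_simp
end

section
/- Let n > m ≥ 1, let 𝒳 be a measurable space, and for each multi-index j = (j₁,…,j_m) ∈ {1,…,n}^m let κ_j : 𝒳^m → [−1,1] be measurable. Define the V-statistic V : 𝒳ⁿ → ℝ by V(x) = n^{−m} Σ_{j∈{1,…,n}^m} κ_j(x_{j₁},…,x_{j_m}). Then M(V) ≤ 2m/n and J(V) ≤ 4m(m−1)/n; that is, V has (2m, 4m(m−1))-weak interactions. -/
open MeasureTheory ProbabilityTheory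

open MeasureTheory ProbabilityTheory Finset

lemma card_eval_le {n m : ℕ} (t : Fin m) (k : Fin n) :
    (univ.filter (fun j : Fin m → Fin n => j t = k)).card ≤ n ^ (m - 1) := by
  classical
  have h : (univ.filter (fun j : Fin m → Fin n => j t = k)).card
      ≤ (univ : Finset ({s : Fin m // s ≠ t} → Fin n)).card := by
    apply Finset.card_le_card_of_injOn (fun j s => j s.1) (fun _ _ => mem_univ _)
    intro j1 h1 j2 h2 h
    simp only [coe_filter, Set.mem_setOf_eq, mem_univ, true_and] at h1 h2
    funext u
    by_cases hu : u = t
    · subst hu; rw [h1, h2]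
    · exact congrFun h ⟨u, hu⟩
  calc _ ≤ _ := h
    _ = n ^ (m - 1) := by
      have h2 : (univ.filter (fun u : Fin m => u ≠ t)).card = m - 1 := by
        have : (univ.filter (fun u : Fin m => u ≠ t)) = univ.erase t := by
          ext u; simp [Finset.mem_erase]
        rw [this, card_erase_of_mem (mem_univ _), card_univ, Fintype.card_fin]
      rw [card_univ, Fintype.card_fun, Fintype.card_fin, Fintype.card_subtype, h2]

lemma card_eval2_le {n m : ℕ} {t s : Fin m} (hts : t ≠ s) (k l : Fin n) :
    (univ.filter (fun j : Fin m → Fin n => j t = k ∧ j s = l)).card ≤ n ^ (m - 2) := by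
  classical
  have h : (univ.filter (fun j : Fin m → Fin n => j t = k ∧ j s = l)).card
      ≤ (univ : Finset ({u : Fin m // u ≠ t ∧ u ≠ s} → Fin n)).card := by
    apply Finset.card_le_card_of_injOn (fun j u => j u.1) (fun _ _ => mem_univ _)
    intro j1 h1 j2 h2 h
    simp only [coe_filter, Set.mem_setOf_eq, mem_univ, true_and] at h1 h2
    funext u
    by_cases hu : u = t
    · subst hu; rw [h1.1, h2.1]
    · by_cases hu' : u = s
      · subst hu'; rw [h1.2, h2.2]
      · exact congrFun h ⟨u, hu, hu'⟩
  calc _ ≤ _ := h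
    _ = n ^ (m - 2) := by
      have h2 : (univ.filter (fun u : Fin m => u ≠ t ∧ u ≠ s)).card = m - 2 := by
        have : (univ.filter (fun u : Fin m => u ≠ t ∧ u ≠ s)) = (univ.erase t).erase s := by
          ext u; simp [Finset.mem_erase]; tauto
        rw [this, card_erase_of_mem (Finset.mem_erase.mpr ⟨Ne.symm hts, mem_univ _⟩),
          card_erase_of_mem (mem_univ _), card_univ, Fintype.card_fin]
        exact Nat.sub_sub m 1 1
      rw [card_univ, Fintype.card_fun, Fintype.card_fin, Fintype.card_subtype, h2]

lemma sumM_bound {𝒳 : Type*} {n m : ℕ}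
    (κ : (Fin m → Fin n) → (Fin m → 𝒳) → ℝ)
    (hκbd : ∀ j v, κ j v ∈ Set.Icc (-1 : ℝ) 1)
    (k : Fin n) (x : Fin n → 𝒳) (y y' : 𝒳) :
    ∑ j : Fin m → Fin n,
      ((κ j fun t => Function.update x k y (j t)) - κ j fun t => Function.update x k y' (j t))
      ≤ 2 * m * (n : ℝ) ^ (m - 1) := by
  classical
  have step1 : ∑ j : Fin m → Fin n,
      ((κ j fun t => Function.update x k y (j t)) - κ j fun t => Function.update x k y' (j t))
      ≤ ∑ j : Fin m → Fin n, 2 * ∑ t : Fin m, (if j t = k then (1:ℝ) else 0) := by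
    apply Finset.sum_le_sum
    intro j _
    by_cases hj : ∃ t, j t = k
    · obtain ⟨t0, ht0⟩ := hj
      have hsum : (1:ℝ) ≤ ∑ t : Fin m, (if j t = k then (1:ℝ) else 0) := by
        have := Finset.single_le_sum (f := fun t : Fin m => if j t = k then (1:ℝ) else 0)
          (fun t _ => by positivity) (mem_univ t0)
        simpa [ht0] using this
      have ha := hκbd j fun t => Function.update x k y (j t)
      have hb := hκbd j fun t => Function.update x k y' (j t)
      simp only [Set.mem_Icc] at ha hb
      linarith
    · push_neg at hj
      have hA : (fun t => Function.update x k y (j t)) = fun t => x (j t) :=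
        funext fun t => Function.update_of_ne (hj t) _ _
      have hB : (fun t => Function.update x k y' (j t)) = fun t => x (j t) :=
        funext fun t => Function.update_of_ne (hj t) _ _
      rw [hA, hB, sub_self]
      positivity
  have step2 : ∑ j : Fin m → Fin n, 2 * ∑ t : Fin m, (if j t = k then (1:ℝ) else 0)
      ≤ 2 * m * (n : ℝ) ^ (m - 1) := by
    rw [← Finset.mul_sum, Finset.sum_comm]
    have : ∀ t : Fin m, ∑ j : Fin m → Fin n, (if j t = k then (1:ℝ) else 0)
        ≤ (n : ℝ) ^ (m - 1) := by
      intro t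
      rw [Finset.sum_boole]
      have := card_eval_le t k
      calc ((univ.filter (fun j : Fin m → Fin n => j t = k)).card : ℝ)
          ≤ ((n ^ (m - 1) : ℕ) : ℝ) := by exact_mod_cast this
        _ = (n : ℝ) ^ (m - 1) := by push_cast; ring
    calc 2 * ∑ t : Fin m, ∑ j : Fin m → Fin n, (if j t = k then (1:ℝ) else 0)
        ≤ 2 * ∑ _t : Fin m, (n : ℝ) ^ (m - 1) := by
          gcongr with t _
          exact this t
      _ = 2 * m * (n : ℝ) ^ (m - 1) := by
          rw [Finset.sum_const, card_univ, Fintype.card_fin]; push_cast; ring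
  linarith

lemma sumJ_bound {𝒳 : Type*} {n m : ℕ}
    (κ : (Fin m → Fin n) → (Fin m → 𝒳) → ℝ)
    (hκbd : ∀ j v, κ j v ∈ Set.Icc (-1 : ℝ) 1)
    {k l : Fin n} (hlk : l ≠ k) (x : Fin n → 𝒳) (z z' y y' : 𝒳) :
    ∑ j : Fin m → Fin n,
      ((κ j fun t => Function.update (Function.update x l z) k y (j t))
        - (κ j fun t => Function.update (Function.update x l z) k y' (j t))
        - (κ j fun t => Function.update (Function.update x l z') k y (j t))
        + (κ j fun t => Function.update (Function.update x l z') k y' (j t)))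
      ≤ 4 * m * ((m : ℝ) - 1) * (n : ℝ) ^ (m - 2) := by
  classical
  set C : ℝ := (n : ℝ) ^ (m - 2) with hC
  have hC0 : 0 ≤ C := by positivity
  have step1 : ∑ j : Fin m → Fin n,
      ((κ j fun t => Function.update (Function.update x l z) k y (j t))
        - (κ j fun t => Function.update (Function.update x l z) k y' (j t))
        - (κ j fun t => Function.update (Function.update x l z') k y (j t))
        + (κ j fun t => Function.update (Function.update x l z') k y' (j t)))
      ≤ ∑ j : Fin m → Fin n, 4 * ∑ t : Fin m, ∑ s : Fin m,
          (if j t = k ∧ j s = l then (1:ℝ) else 0) := by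
    apply Finset.sum_le_sum
    intro j _
    have hnn : (0:ℝ) ≤ ∑ t : Fin m, ∑ s : Fin m, (if j t = k ∧ j s = l then (1:ℝ) else 0) := by
      positivity
    by_cases hjk : ∃ t, j t = k
    · by_cases hjl : ∃ s, j s = l
      · obtain ⟨t0, ht0⟩ := hjk
        obtain ⟨s0, hs0⟩ := hjl
        have hsum : (1:ℝ) ≤ ∑ t : Fin m, ∑ s : Fin m,
            (if j t = k ∧ j s = l then (1:ℝ) else 0) := by
          have h1 : (1:ℝ) ≤ ∑ s : Fin m, (if j t0 = k ∧ j s = l then (1:ℝ) else 0) := by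
            have := Finset.single_le_sum
              (f := fun s : Fin m => if j t0 = k ∧ j s = l then (1:ℝ) else 0)
              (fun s _ => by positivity) (mem_univ s0)
            simpa [ht0, hs0] using this
          have := Finset.single_le_sum
            (f := fun t : Fin m => ∑ s : Fin m, (if j t = k ∧ j s = l then (1:ℝ) else 0))
            (fun t _ => by positivity) (mem_univ t0)
          linarith
        have h1 := hκbd j fun t => Function.update (Function.update x l z) k y (j t)
        have h2 := hκbd j fun t => Function.update (Function.update x l z) k y' (j t)
        have h3 := hκbd j fun t => Function.update (Function.update x l z') k y (j t)
        have h4 := hκbd j fun t => Function.update (Function.update x l z') k y' (j t)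
        simp only [Set.mem_Icc] at h1 h2 h3 h4
        linarith
      · -- l not in range: term1 = term3, term2 = term4
        push_neg at hjl
        have key : ∀ w : 𝒳, (fun t => Function.update (Function.update x l z) k w (j t))
            = fun t => Function.update (Function.update x l z') k w (j t) := by
          intro w
          funext t
          by_cases htk : j t = k
          · rw [htk, Function.update_self, Function.update_self]
          · rw [Function.update_of_ne htk, Function.update_of_ne htk,
              Function.update_of_ne (hjl t), Function.update_of_ne (hjl t)]
        rw [key y, key y']
        have : ∀ r r' : ℝ, r - r' - r + r' = 0 := fun r r' => by ring
        rw [this]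
        linarith
    · -- k not in range: term1 = term2, term3 = term4
      push_neg at hjk
      have key : ∀ w : Fin n → 𝒳, (fun t => Function.update w k y (j t))
          = fun t => Function.update w k y' (j t) := by
        intro w
        funext t
        rw [Function.update_of_ne (hjk t), Function.update_of_ne (hjk t)]
      rw [key, key]
      have : ∀ r r' : ℝ, r - r - r' + r' = 0 := fun r r' => by ring
      rw [this]
      linarith
  have count : ∀ t s : Fin m, ∑ j : Fin m → Fin n, (if j t = k ∧ j s = l then (1:ℝ) else 0)
      ≤ (if t = s then 0 else C) := by
    intro t s
    rw [Finset.sum_boole]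
    by_cases hts : t = s
    · subst hts
      have : (univ.filter (fun j : Fin m → Fin n => j t = k ∧ j t = l)) = ∅ := by
        ext j; simp only [mem_filter, mem_univ, true_and, Finset.notMem_empty, iff_false]
        rintro ⟨h1, h2⟩
        exact hlk (h2.symm.trans h1)
      simp [this]
    · simp only [hts, if_false, hC]
      have := card_eval2_le hts k l
      calc ((univ.filter (fun j : Fin m → Fin n => j t = k ∧ j s = l)).card : ℝ)
          ≤ ((n ^ (m - 2) : ℕ) : ℝ) := by exact_mod_cast this
        _ = (n : ℝ) ^ (m - 2) := by push_cast; ring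
  have step2 : ∑ j : Fin m → Fin n, 4 * ∑ t : Fin m, ∑ s : Fin m,
        (if j t = k ∧ j s = l then (1:ℝ) else 0)
      ≤ 4 * m * ((m : ℝ) - 1) * C := by
    rw [← Finset.mul_sum, Finset.sum_comm]
    have swap : ∀ t : Fin m, ∑ j : Fin m → Fin n, ∑ s : Fin m,
        (if j t = k ∧ j s = l then (1:ℝ) else 0)
        = ∑ s : Fin m, ∑ j : Fin m → Fin n, (if j t = k ∧ j s = l then (1:ℝ) else 0) :=
      fun t => Finset.sum_comm
    have h1 : ∑ t : Fin m, ∑ j : Fin m → Fin n, ∑ s : Fin m,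
          (if j t = k ∧ j s = l then (1:ℝ) else 0)
        ≤ ∑ t : Fin m, ∑ s : Fin m, (if t = s then (0:ℝ) else C) := by
      apply Finset.sum_le_sum
      intro t _
      rw [swap t]
      exact Finset.sum_le_sum fun s _ => count t s
    have h2 : ∀ t : Fin m, ∑ s : Fin m, (if t = s then (0:ℝ) else C) = m * C - C := by
      intro t
      have : (fun s : Fin m => if t = s then (0:ℝ) else C)
          = fun s => C - (if t = s then C else 0) := by
        funext s; by_cases h : t = s <;> simp [h]
      rw [this, Finset.sum_sub_distrib, Finset.sum_const, card_univ, Fintype.card_fin,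
        Finset.sum_ite_eq]
      simp
    have h3 : ∑ t : Fin m, ∑ s : Fin m, (if t = s then (0:ℝ) else C) = m * (m * C - C) := by
      rw [Finset.sum_congr rfl (fun t _ => h2 t), Finset.sum_const, card_univ,
        Fintype.card_fin, nsmul_eq_mul]
    calc 4 * ∑ t : Fin m, ∑ j : Fin m → Fin n, ∑ s : Fin m,
          (if j t = k ∧ j s = l then (1:ℝ) else 0)
        ≤ 4 * (m * (m * C - C)) := by
          rw [← h3]; linarith
      _ = 4 * m * ((m : ℝ) - 1) * C := by ring
  linarith
/-- V-statistics have `(2m, 4m(m−1))`-weak interactions: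
`M(V) ≤ 2m/n` and `J(V) ≤ 4m(m−1)/n`. -/
theorem Vstatistic_weak_interactions {𝒳 : Type*} [MeasurableSpace 𝒳] [Nonempty 𝒳]
    {n m : ℕ} (hm : 1 ≤ m) (hmn : m < n)
    (κ : (Fin m → Fin n) → (Fin m → 𝒳) → ℝ)
    (hκmeas : ∀ j, Measurable (κ j))
    (hκbd : ∀ j v, κ j v ∈ Set.Icc (-1 : ℝ) 1) :
    Msem (fun x : Fin n → 𝒳 =>
        (1 / (n : ℝ) ^ m) * ∑ j : Fin m → Fin n, κ j fun t => x (j t)) ≤ 2 * m / n ∧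
      Jsem (fun x : Fin n → 𝒳 =>
        (1 / (n : ℝ) ^ m) * ∑ j : Fin m → Fin n, κ j fun t => x (j t)) ≤
        4 * m * ((m : ℝ) - 1) / n := by
  have hn : 0 < n := lt_trans (Nat.lt_of_lt_of_le Nat.zero_lt_one hm) hmn
  have hn0 : (0:ℝ) < n := by exact_mod_cast hn
  have hne : (n:ℝ) ≠ 0 := ne_of_gt hn0
  have hm1 : (1:ℝ) ≤ m := by exact_mod_cast hm
  constructor
  · -- M bound
    rw [Msem]
    have hb : (0:ℝ) ≤ 2 * m / n := by positivity
    refine Real.iSup_le (fun k => Real.iSup_le (fun x => Real.iSup_le (fun y =>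
      Real.iSup_le (fun y' => ?_) hb) hb) hb) hb
    simp only [partialDiff]
    rw [← mul_sub, ← Finset.sum_sub_distrib]
    have key := sumM_bound κ hκbd k x y y'
    have h1 : (1 / (n:ℝ) ^ m) * (∑ j : Fin m → Fin n,
        ((κ j fun t => Function.update x k y (j t))
          - κ j fun t => Function.update x k y' (j t)))
        ≤ (1 / (n:ℝ) ^ m) * (2 * m * (n:ℝ) ^ (m - 1)) :=
      mul_le_mul_of_nonneg_left key (by positivity)
    refine h1.trans (le_of_eq ?_)
    have hpow : (n:ℝ) ^ m = (n:ℝ) ^ (m - 1) * n := by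
      rw [← pow_succ]; congr 1; omega
    rw [hpow]
    have hne2 : (n:ℝ) ^ (m - 1) ≠ 0 := by positivity
    field_simp
  · -- J bound
    have hb : (0:ℝ) ≤ 4 * m * ((m:ℝ) - 1) / ((n:ℝ) ^ 2) := by
      have : (0:ℝ) ≤ (m:ℝ) - 1 := by linarith
      positivity
    have hsup : (⨆ k : Fin n, ⨆ l : Fin n, ⨆ _ : l ≠ k, ⨆ x : Fin n → 𝒳, ⨆ z : 𝒳, ⨆ z' : 𝒳,
        ⨆ y : 𝒳, ⨆ y' : 𝒳, partialDiff (partialDiff (fun x : Fin n → 𝒳 =>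
          (1 / (n : ℝ) ^ m) * ∑ j : Fin m → Fin n, κ j fun t => x (j t)) k y y') l z z' x)
        ≤ 4 * m * ((m:ℝ) - 1) / ((n:ℝ) ^ 2) := by
      refine Real.iSup_le (fun k => Real.iSup_le (fun l => Real.iSup_le (fun hlk =>
        Real.iSup_le (fun x => Real.iSup_le (fun z => Real.iSup_le (fun z' =>
        Real.iSup_le (fun y => Real.iSup_le (fun y' => ?_) hb) hb) hb) hb) hb) hb) hb) hb
      simp only [partialDiff]
      have expand : ∀ p A B C D : ℝ, p * A - p * B - (p * C - p * D) = p * (A - B - C + D) :=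
        fun p A B C D => by ring
      rw [expand, ← Finset.sum_sub_distrib, ← Finset.sum_sub_distrib, ← Finset.sum_add_distrib]
      have key := sumJ_bound κ hκbd hlk x z z' y y'
      have h1 : (1 / (n:ℝ) ^ m) * (∑ j : Fin m → Fin n,
          ((κ j fun t => Function.update (Function.update x l z) k y (j t))
            - (κ j fun t => Function.update (Function.update x l z) k y' (j t))
            - (κ j fun t => Function.update (Function.update x l z') k y (j t))
            + (κ j fun t => Function.update (Function.update x l z') k y' (j t))))
          ≤ (1 / (n:ℝ) ^ m) * (4 * m * ((m:ℝ) - 1) * (n:ℝ) ^ (m - 2)) :=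
        mul_le_mul_of_nonneg_left key (by positivity)
      refine h1.trans ?_
      rcases eq_or_lt_of_le hm with hm2 | hm2
      · -- m = 1
        rw [← hm2]
        norm_num
      · -- m ≥ 2
        have hpow : (n:ℝ) ^ m = (n:ℝ) ^ (m - 2) * (n:ℝ) ^ 2 := by
          rw [← pow_add]; congr 1; omega
        have hne2 : (n:ℝ) ^ (m - 2) ≠ 0 := by positivity
        apply le_of_eq
        rw [hpow]
        field_simp
    calc Jsem (fun x : Fin n → 𝒳 =>
          (1 / (n : ℝ) ^ m) * ∑ j : Fin m → Fin n, κ j fun t => x (j t))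
        ≤ (n:ℝ) * (4 * m * ((m:ℝ) - 1) / ((n:ℝ) ^ 2)) := by
          rw [Jsem]
          exact mul_le_mul_of_nonneg_left hsup (le_of_lt hn0)
      _ = 4 * m * ((m:ℝ) - 1) / n := by
          field_simp
end

section
/- Let F : [0,1] → ℝ be Lipschitz with supremum norm ‖F‖_∞ and Lipschitz constant ‖F‖_Lip, and define the L-statistic f : [0,1]ⁿ → ℝ by f(x) = (1/n) Σ_{i=1}ⁿ F(i/n)·x_{(i)}, where x_{(1)} ≤ … ≤ x_{(n)} is the order statistic of x. Then for all x ∈ [0,1]ⁿ, all k ≠ l and all y, y', z, z' ∈ [0,1]: |D^k_{y,y'} f(x)| ≤ ‖F‖_∞ · diam([[y,y']])/n and |D^l_{z,z'} D^k_{y,y'} f(x)| ≤ ‖F‖_Lip · diam([[z,z']] ∩ [[y,y']])/n², where [[α,β]] denotes the closed interval [min{α,β}, max{α,β}] and diam denotes its length. -/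
open MeasureTheory ProbabilityTheory

namespace LstatAux

/-! ### Indicator functions and their integrals -/

noncomputable def χ (c t : ℝ) : ℝ := if t < c then 1 else 0
noncomputable def χI (a b t : ℝ) : ℝ := if a ≤ t ∧ t ≤ b then 1 else 0

lemma χI_nonneg (a b t : ℝ) : 0 ≤ χI a b t := by
  rw [χI]; split_ifs <;> norm_num

lemma χI_eq (a b : ℝ) : χI a b = Set.indicator (Set.Icc a b) (fun _ => (1:ℝ)) := by
  ext t; simp [χI, Set.indicator, Set.mem_Icc]

lemma intervalIntegrable_χI (a b : ℝ) : IntervalIntegrable (χI a b) volume 0 1 := by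
  rw [χI_eq, intervalIntegrable_iff]
  have : IntegrableOn (fun _ : ℝ => (1:ℝ)) (Set.uIoc 0 1) volume :=
    integrableOn_const (by rw [Set.uIoc_of_le zero_le_one]; exact measure_Ioc_lt_top.ne)
  exact this.indicator measurableSet_Icc

lemma integral_χI {a b : ℝ} (h0 : 0 ≤ a) (h1 : b ≤ 1) :
    ∫ t in (0:ℝ)..1, χI a b t = max 0 (b - a) := by
  rcases lt_or_ge b a with h | h
  · have : ∀ t, χI a b t = 0 := by
      intro t; simp only [χI, ite_eq_right_iff]; rintro ⟨h1', h2'⟩; linarith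
    simp only [this, intervalIntegral.integral_zero]
    rw [max_eq_left]; linarith
  · rw [χI_eq, intervalIntegral.integral_of_le (by norm_num),
      MeasureTheory.integral_indicator measurableSet_Icc]
    rw [Measure.restrict_restrict measurableSet_Icc]
    have hvol : volume (Set.Icc a b ∩ Set.Ioc 0 1) = ENNReal.ofReal (b - a) := by
      apply le_antisymm
      · calc volume (Set.Icc a b ∩ Set.Ioc 0 1) ≤ volume (Set.Icc a b) :=
              measure_mono Set.inter_subset_left
          _ = ENNReal.ofReal (b - a) := Real.volume_Icc
      · have hsub : Set.Ioc a b ⊆ Set.Icc a b ∩ Set.Ioc 0 1 := by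
          intro t ht
          exact ⟨⟨le_of_lt ht.1, ht.2⟩, ⟨lt_of_le_of_lt h0 ht.1, le_trans ht.2 h1⟩⟩
        calc ENNReal.ofReal (b - a) = volume (Set.Ioc a b) := Real.volume_Ioc.symm
          _ ≤ _ := measure_mono hsub
    rw [MeasureTheory.setIntegral_const, MeasureTheory.measureReal_def, hvol, smul_eq_mul, mul_one,
      ENNReal.toReal_ofReal (by linarith), max_eq_right (by linarith)]

lemma χ_eq (c : ℝ) : χ c = Set.indicator (Set.Iio c) (fun _ => (1:ℝ)) := by
  ext t; simp [χ, Set.indicator, Set.mem_Iio]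

lemma intervalIntegrable_χ (c : ℝ) : IntervalIntegrable (χ c) volume 0 1 := by
  rw [χ_eq, intervalIntegrable_iff]
  have : IntegrableOn (fun _ : ℝ => (1:ℝ)) (Set.uIoc 0 1) volume :=
    integrableOn_const (by rw [Set.uIoc_of_le zero_le_one]; exact measure_Ioc_lt_top.ne)
  exact this.indicator measurableSet_Iio

lemma integral_χ {c : ℝ} (h0 : 0 ≤ c) (h1 : c ≤ 1) :
    ∫ t in (0:ℝ)..1, χ c t = c := by
  rw [χ_eq, intervalIntegral.integral_of_le (by norm_num),
    MeasureTheory.integral_indicator measurableSet_Iio,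
    Measure.restrict_restrict measurableSet_Iio]
  have hset : Set.Iio c ∩ Set.Ioc 0 1 = Set.Ioo 0 c := by
    ext t; simp only [Set.mem_inter_iff, Set.mem_Iio, Set.mem_Ioc, Set.mem_Ioo]
    constructor
    · rintro ⟨h1', h2', _⟩; exact ⟨h2', h1'⟩
    · rintro ⟨h1', h2'⟩; exact ⟨h2', h1', by linarith⟩
  rw [hset, MeasureTheory.setIntegral_const, MeasureTheory.measureReal_def, Real.volume_Ioo, smul_eq_mul, mul_one,
    ENNReal.toReal_ofReal (by linarith)]
  simp

/-! ### The coefficient cumulative sum `g` -/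

noncomputable def g (F : ℝ → ℝ) (n m : ℕ) : ℝ :=
  ∑ i ∈ Finset.range n, if n - m ≤ i then F ((i+1)/n) else 0

lemma g_succ (F : ℝ → ℝ) {n m : ℕ} (hm : m < n) :
    g F n (m+1) = g F n m + F (((n - m : ℕ) : ℝ)/n) := by
  have key : ∀ i ∈ Finset.range n,
      (if n - (m+1) ≤ i then F ((i+1)/n) else 0) =
        (if n - m ≤ i then F ((i+1)/n) else 0) + (if i = n - m - 1 then F ((i+1)/n) else 0) := by
    intro i _
    rcases eq_or_ne i (n - m - 1) with h | h
    · subst h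
      rw [if_pos (by omega), if_neg (by omega), if_pos rfl, zero_add]
    · rw [if_neg h, add_zero]
      by_cases h2 : n - m ≤ i
      · rw [if_pos (by omega), if_pos h2]
      · rw [if_neg (by omega), if_neg h2]
  rw [g, Finset.sum_congr rfl key, Finset.sum_add_distrib]
  congr 1
  rw [Finset.sum_ite_eq' (Finset.range n) (n - m - 1) (fun i => F ((i+1)/n)),
    if_pos (Finset.mem_range.2 (by omega))]
  congr 2
  have : n - m - 1 + 1 = n - m := by omega
  exact_mod_cast congrArg (Nat.cast : ℕ → ℝ) this

variable {n : ℕ}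

/-! ### Sorted sums as integrals of counts -/

lemma mem_iff_card {s : Fin n → ℝ} (hs : Monotone s) (t : ℝ) (i : Fin n) :
    t < s i ↔ n - (Finset.univ.filter fun j => t < s j).card ≤ (i : ℕ) := by
  set A := Finset.univ.filter fun j => t < s j with hA
  have hcard : A.card ≤ n := le_trans (Finset.card_le_univ A) (by simp)
  constructor
  · intro h
    have hsub : Finset.Ici i ⊆ A := by
      intro j hj
      exact Finset.mem_filter.2 ⟨Finset.mem_univ _, lt_of_lt_of_le h (hs (Finset.mem_Ici.1 hj))⟩
    have := Finset.card_le_card hsub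
    rw [Fin.card_Ici] at this
    omega
  · intro h
    by_contra h'
    have hsub : A ⊆ Finset.Ioi i := by
      intro j hj
      rw [Finset.mem_Ioi]
      by_contra h''
      exact h' (lt_of_lt_of_le (Finset.mem_filter.1 hj).2 (hs (not_lt.1 h'')))
    have := Finset.card_le_card hsub
    rw [Fin.card_Ioi] at this
    have hi := i.isLt
    omega

lemma card_filter_perm (w : Fin n → ℝ) (σ : Equiv.Perm (Fin n)) (t : ℝ) :
    (Finset.univ.filter fun j => t < w j).card =
      (Finset.univ.filter fun i => t < w (σ i)).card := by
  apply Finset.card_bij' (fun j _ => σ.symm j) (fun i _ => σ i) <;>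
    simp [Finset.mem_filter]

noncomputable def Ncnt (w : Fin n → ℝ) (t : ℝ) : ℕ := (Finset.univ.filter fun j => t < w j).card

noncomputable def H (F : ℝ → ℝ) (w : Fin n → ℝ) (t : ℝ) : ℝ :=
  ∑ i : Fin n, F (((i:ℕ)+1)/n) * χ (w (Tuple.sort w i)) t

lemma H_eq_g (F : ℝ → ℝ) (w : Fin n → ℝ) (t : ℝ) : H F w t = g F n (Ncnt w t) := by
  have hmono : Monotone (w ∘ Tuple.sort w) := Tuple.monotone_sort w
  have hN : Ncnt w t = (Finset.univ.filter fun i => t < (w ∘ Tuple.sort w) i).card :=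
    card_filter_perm w (Tuple.sort w) t
  calc H F w t = ∑ i : Fin n, if t < (w ∘ Tuple.sort w) i then F (((i:ℕ)+1)/n) else 0 := by
        apply Finset.sum_congr rfl; intro i _
        simp only [χ, Function.comp_apply, mul_ite, mul_one, mul_zero]
    _ = ∑ i : Fin n, if n - Ncnt w t ≤ (i : ℕ) then F (((i:ℕ)+1)/n) else 0 := by
        apply Finset.sum_congr rfl; intro i _
        congr 1
        rw [eq_iff_iff, hN]
        exact mem_iff_card hmono t i
    _ = g F n (Ncnt w t) := by
        rw [g]
        exact Fin.sum_univ_eq_sum_range (fun i => if n - Ncnt w t ≤ i then F ((i+1)/n) else 0) n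

lemma intervalIntegrable_H (F : ℝ → ℝ) (w : Fin n → ℝ) :
    IntervalIntegrable (H F w) volume 0 1 := by
  have h : IntervalIntegrable
      (∑ i : Fin n, fun t => F (((i:ℕ)+1)/n) * χ (w (Tuple.sort w i)) t) volume 0 1 :=
    IntervalIntegrable.sum _ fun i _ => (intervalIntegrable_χ _).const_mul _
  have he : H F w = ∑ i : Fin n, fun t => F (((i:ℕ)+1)/n) * χ (w (Tuple.sort w i)) t := by
    ext t; rw [Finset.sum_apply]; rfl
  rw [he]; exact h

lemma integral_H (F : ℝ → ℝ) (w : Fin n → ℝ) (hw : ∀ j, w j ∈ Set.Icc (0:ℝ) 1) :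
    ∫ t in (0:ℝ)..1, H F w t = ∑ i : Fin n, F (((i:ℕ)+1)/n) * w (Tuple.sort w i) := by
  have : ∀ t, H F w t = ∑ i : Fin n, F (((i:ℕ)+1)/n) * χ (w (Tuple.sort w i)) t := fun _ => rfl
  rw [intervalIntegral.integral_congr (fun t _ => this t),
    intervalIntegral.integral_finset_sum (fun i _ => (intervalIntegrable_χ _).const_mul _)]
  apply Finset.sum_congr rfl
  intro i _
  rw [intervalIntegral.integral_const_mul, integral_χ (hw _).1 (hw _).2]

lemma cnt_update {S : Finset (Fin n)} {k : Fin n} (hk : k ∈ S) (x : Fin n → ℝ) (a t : ℝ) :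
    (S.filter fun j => t < Function.update x k a j).card =
      ((S.erase k).filter fun j => t < x j).card + (if t < a then 1 else 0) := by
  have hfc : ((S.erase k).filter fun j => t < Function.update x k a j)
      = (S.erase k).filter fun j => t < x j := by
    apply Finset.filter_congr
    intro j hj
    rw [Function.update_of_ne (Finset.ne_of_mem_erase hj)]
  conv_lhs => rw [← Finset.insert_erase hk]
  rw [Finset.filter_insert, Function.update_self]
  by_cases h : t < a
  · rw [if_pos h, if_pos h, hfc,
      Finset.card_insert_of_notMem
        (fun hmem => (Finset.mem_erase.1 (Finset.mem_filter.1 hmem).1).1 rfl)]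
  · rw [if_neg h, if_neg h, hfc, add_zero]

/-! ### Pointwise bounds on differences of `g` -/

lemma first_pointwise (F : ℝ → ℝ) (Fsup : ℝ)
    (hFsup : ∀ t ∈ Set.Icc (0:ℝ) 1, |F t| ≤ Fsup) (hFsup0 : 0 ≤ Fsup)
    {M : ℕ} (hM : M + 1 ≤ n) (y y' t : ℝ) :
    |g F n (M + if t < y then 1 else 0) - g F n (M + if t < y' then 1 else 0)|
      ≤ Fsup * χI (min y y') (max y y') t := by
  have hχ : 0 ≤ χI (min y y') (max y y') t := χI_nonneg _ _ _
  have hn : (0:ℝ) < n := by exact_mod_cast Nat.lt_of_lt_of_le (Nat.succ_pos M) hM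
  have harg : ((n - M : ℕ):ℝ)/n ∈ Set.Icc (0:ℝ) 1 := by
    constructor
    · positivity
    · rw [div_le_one hn]; exact_mod_cast Nat.sub_le n M
  have hgs := g_succ F (show M < n by omega)
  rcases em (t < y) with hy | hy <;> rcases em (t < y') with hy' | hy' <;>
    simp only [hy, hy', if_true, if_false, ite_true, ite_false, add_zero]
  · rw [sub_self, abs_zero]; exact mul_nonneg hFsup0 hχ
  · rw [show g F n (M+1) - g F n M = F (((n-M:ℕ):ℝ)/n) by rw [hgs]; ring]
    rw [χI, if_pos ⟨le_trans (min_le_right _ _) (not_lt.1 hy'),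
      le_trans (le_of_lt hy) (le_max_left _ _)⟩, mul_one]
    exact hFsup _ harg
  · rw [abs_sub_comm, show g F n (M+1) - g F n M = F (((n-M:ℕ):ℝ)/n) by rw [hgs]; ring]
    rw [χI, if_pos ⟨le_trans (min_le_left _ _) (not_lt.1 hy),
      le_trans (le_of_lt hy') (le_max_right _ _)⟩, mul_one]
    exact hFsup _ harg
  · rw [sub_self, abs_zero]; exact mul_nonneg hFsup0 hχ

lemma second_core (F : ℝ → ℝ) (FLip : ℝ)
    (hFlip : ∀ s ∈ Set.Icc (0 : ℝ) 1, ∀ t ∈ Set.Icc (0 : ℝ) 1, |F s - F t| ≤ FLip * |s - t|)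
    {M : ℕ} (h2 : M + 2 ≤ n) :
    |g F n (M+1+1) - g F n (M+1) - g F n (M+1) + g F n M| ≤ FLip / n := by
  have hn : (0:ℝ) < n := by exact_mod_cast (by omega : 0 < n)
  have e1 := g_succ F (show M + 1 < n by omega)
  have e2 := g_succ F (show M < n by omega)
  have key : g F n (M+1+1) - g F n (M+1) - g F n (M+1) + g F n M
      = F (((n - (M+1) : ℕ):ℝ)/n) - F (((n - M : ℕ):ℝ)/n) := by
    rw [e1, e2]; ring
  rw [key]
  have hq : (n - M : ℕ) = (n - (M+1)) + 1 := by omega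
  have hmem1 : ((n - (M+1) : ℕ):ℝ)/n ∈ Set.Icc (0:ℝ) 1 := by
    constructor
    · positivity
    · rw [div_le_one hn]; exact_mod_cast Nat.sub_le n (M+1)
  have hmem2 : ((n - M : ℕ):ℝ)/n ∈ Set.Icc (0:ℝ) 1 := by
    constructor
    · positivity
    · rw [div_le_one hn]; exact_mod_cast Nat.sub_le n M
  have habs : |((n - (M+1) : ℕ):ℝ)/n - ((n - M : ℕ):ℝ)/n| = 1/n := by
    rw [hq]
    push_cast
    rw [show ((n - (M+1) : ℕ):ℝ)/n - (((n - (M+1) : ℕ):ℝ) + 1)/n = -(1/(n:ℝ)) by ring, abs_neg,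
      abs_of_nonneg (by positivity)]
  calc |F (((n - (M+1) : ℕ):ℝ)/n) - F (((n - M : ℕ):ℝ)/n)|
      ≤ FLip * |((n - (M+1) : ℕ):ℝ)/n - ((n - M : ℕ):ℝ)/n| := hFlip _ hmem1 _ hmem2
    _ = FLip / n := by rw [habs]; ring

lemma second_pointwise (F : ℝ → ℝ) (FLip : ℝ)
    (hFlip : ∀ s ∈ Set.Icc (0 : ℝ) 1, ∀ t ∈ Set.Icc (0 : ℝ) 1, |F s - F t| ≤ FLip * |s - t|)
    (hFlip0 : 0 ≤ FLip)
    {M : ℕ} (hM : M + 2 ≤ n) (y y' z z' t : ℝ) :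
    |g F n (M + (if t < z then 1 else 0) + (if t < y then 1 else 0))
      - g F n (M + (if t < z then 1 else 0) + (if t < y' then 1 else 0))
      - g F n (M + (if t < z' then 1 else 0) + (if t < y then 1 else 0))
      + g F n (M + (if t < z' then 1 else 0) + (if t < y' then 1 else 0))|
      ≤ (FLip / n) * χI (max (min z z') (min y y')) (min (max z z') (max y y')) t := by
  have hn : (0:ℝ) < n := by exact_mod_cast (by omega : 0 < n)
  have hχ : 0 ≤ χI (max (min z z') (min y y')) (min (max z z') (max y y')) t := χI_nonneg _ _ _
  have hR : 0 ≤ (FLip / n) * χI (max (min z z') (min y y')) (min (max z z') (max y y')) t :=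
    mul_nonneg (div_nonneg hFlip0 (le_of_lt hn)) hχ
  have hcore := second_core F FLip hFlip hM
  rcases em (t < y) with hy | hy <;> rcases em (t < y') with hy' | hy'
  · simp only [hy, hy', if_true, ite_true]
    rw [show ∀ X Y : ℝ, X - X - Y + Y = 0 from fun X Y => by ring]
    rw [abs_zero]; exact hR
  · have hone : min y y' ≤ t ∧ t ≤ max y y' :=
      ⟨le_trans (min_le_right _ _) (not_lt.1 hy'), le_trans (le_of_lt hy) (le_max_left _ _)⟩
    rcases em (t < z) with hz | hz <;> rcases em (t < z') with hz' | hz' <;>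
      simp only [hy, hy', hz, hz', if_true, if_false, ite_true, ite_false, add_zero]
    · rw [show ∀ X Y : ℝ, X - Y - X + Y = 0 from fun X Y => by ring, abs_zero]; exact hR
    · have h1 : χI (max (min z z') (min y y')) (min (max z z') (max y y')) t = 1 := by
        rw [χI, if_pos ⟨max_le (le_trans (min_le_right _ _) (not_lt.1 hz')) hone.1,
          le_min (le_trans (le_of_lt hz) (le_max_left _ _)) hone.2⟩]
      rw [h1, mul_one]; exact hcore
    · have h1 : χI (max (min z z') (min y y')) (min (max z z') (max y y')) t = 1 := by
        rw [χI, if_pos ⟨max_le (le_trans (min_le_left _ _) (not_lt.1 hz)) hone.1,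
          le_min (le_trans (le_of_lt hz') (le_max_right _ _)) hone.2⟩]
      rw [h1, mul_one]
      rw [show g F n (M+1) - g F n M - g F n (M+1+1) + g F n (M+1)
          = -(g F n (M+1+1) - g F n (M+1) - g F n (M+1) + g F n M) by ring, abs_neg]
      exact hcore
    · rw [show ∀ X Y : ℝ, X - Y - X + Y = 0 from fun X Y => by ring, abs_zero]; exact hR
  · have hone : min y y' ≤ t ∧ t ≤ max y y' :=
      ⟨le_trans (min_le_left _ _) (not_lt.1 hy), le_trans (le_of_lt hy') (le_max_right _ _)⟩
    rcases em (t < z) with hz | hz <;> rcases em (t < z') with hz' | hz' <;>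
      simp only [hy, hy', hz, hz', if_true, if_false, ite_true, ite_false, add_zero]
    · rw [show ∀ X Y : ℝ, X - Y - X + Y = 0 from fun X Y => by ring, abs_zero]; exact hR
    · have h1 : χI (max (min z z') (min y y')) (min (max z z') (max y y')) t = 1 := by
        rw [χI, if_pos ⟨max_le (le_trans (min_le_right _ _) (not_lt.1 hz')) hone.1,
          le_min (le_trans (le_of_lt hz) (le_max_left _ _)) hone.2⟩]
      rw [h1, mul_one]
      rw [show g F n (M+1) - g F n (M+1+1) - g F n M + g F n (M+1)
          = -(g F n (M+1+1) - g F n (M+1) - g F n (M+1) + g F n M) by ring, abs_neg]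
      exact hcore
    · have h1 : χI (max (min z z') (min y y')) (min (max z z') (max y y')) t = 1 := by
        rw [χI, if_pos ⟨max_le (le_trans (min_le_left _ _) (not_lt.1 hz)) hone.1,
          le_min (le_trans (le_of_lt hz') (le_max_right _ _)) hone.2⟩]
      rw [h1, mul_one]
      rw [show g F n M - g F n (M+1) - g F n (M+1) + g F n (M+1+1)
          = (g F n (M+1+1) - g F n (M+1) - g F n (M+1) + g F n M) by ring]
      exact hcore
    · rw [show ∀ X Y : ℝ, X - Y - X + Y = 0 from fun X Y => by ring, abs_zero]; exact hR
  · simp only [hy, hy', if_false, ite_false, add_zero]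
    rw [show ∀ X Y : ℝ, X - X - Y + Y = 0 from fun X Y => by ring, abs_zero]; exact hR

/-! ### The two integral bounds -/

lemma part1 (F : ℝ → ℝ) (Fsup : ℝ)
    (hFsup : ∀ t ∈ Set.Icc (0:ℝ) 1, |F t| ≤ Fsup) (hFsup0 : 0 ≤ Fsup)
    (hn : 1 ≤ n) (x : Fin n → ℝ) (k : Fin n) (y y' : ℝ)
    (hy : y ∈ Set.Icc (0:ℝ) 1) (hy' : y' ∈ Set.Icc (0:ℝ) 1) :
    |∫ t in (0:ℝ)..1,
        (H F (Function.update x k y) t - H F (Function.update x k y') t)|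
      ≤ Fsup * |y - y'| := by
  have hpt : ∀ t, |H F (Function.update x k y) t - H F (Function.update x k y') t|
      ≤ Fsup * χI (min y y') (max y y') t := by
    intro t
    have hMle : ((Finset.univ.erase k).filter fun j => t < x j).card + 1 ≤ n := by
      have h1 : ((Finset.univ.erase k).filter fun j => t < x j).card
          ≤ (Finset.univ.erase k).card := Finset.card_filter_le _ _
      have h2 : (Finset.univ.erase k).card = n - 1 := by
        rw [Finset.card_erase_of_mem (Finset.mem_univ k), Finset.card_univ, Fintype.card_fin]
      omega
    have e1 : Ncnt (Function.update x k y) t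
        = ((Finset.univ.erase k).filter fun j => t < x j).card + (if t < y then 1 else 0) :=
      cnt_update (Finset.mem_univ k) x y t
    have e2 : Ncnt (Function.update x k y') t
        = ((Finset.univ.erase k).filter fun j => t < x j).card + (if t < y' then 1 else 0) :=
      cnt_update (Finset.mem_univ k) x y' t
    rw [H_eq_g, H_eq_g, e1, e2]
    exact first_pointwise F Fsup hFsup hFsup0 hMle y y' t
  have hDint : IntervalIntegrable
      (fun t => H F (Function.update x k y) t - H F (Function.update x k y') t) volume 0 1 :=
    (intervalIntegrable_H F _).sub (intervalIntegrable_H F _)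
  have hBint : IntervalIntegrable (fun t => Fsup * χI (min y y') (max y y') t) volume 0 1 :=
    (intervalIntegrable_χI _ _).const_mul _
  calc |∫ t in (0:ℝ)..1, (H F (Function.update x k y) t - H F (Function.update x k y') t)|
      ≤ ∫ t in (0:ℝ)..1, |H F (Function.update x k y) t - H F (Function.update x k y') t| :=
        intervalIntegral.abs_integral_le_integral_abs zero_le_one
    _ ≤ ∫ t in (0:ℝ)..1, Fsup * χI (min y y') (max y y') t :=
        intervalIntegral.integral_mono_on zero_le_one hDint.abs hBint (fun t _ => hpt t)
    _ = Fsup * max 0 (max y y' - min y y') := by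
        rw [intervalIntegral.integral_const_mul,
          integral_χI (le_min hy.1 hy'.1) (max_le hy.2 hy'.2)]
    _ = Fsup * |y - y'| := by
        rw [max_eq_right (sub_nonneg.2 min_le_max), max_sub_min_eq_abs, abs_sub_comm]

lemma part2 (F : ℝ → ℝ) (FLip : ℝ)
    (hFlip : ∀ s ∈ Set.Icc (0 : ℝ) 1, ∀ t ∈ Set.Icc (0 : ℝ) 1, |F s - F t| ≤ FLip * |s - t|)
    (hFlip0 : 0 ≤ FLip)
    (hn : 2 ≤ n) (x : Fin n → ℝ) (k l : Fin n) (hkl : k ≠ l) (y y' z z' : ℝ)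
    (hy : y ∈ Set.Icc (0:ℝ) 1) (hy' : y' ∈ Set.Icc (0:ℝ) 1)
    (hz : z ∈ Set.Icc (0:ℝ) 1) (hz' : z' ∈ Set.Icc (0:ℝ) 1) :
    |∫ t in (0:ℝ)..1,
        (H F (Function.update (Function.update x l z) k y) t
          - H F (Function.update (Function.update x l z) k y') t
          - H F (Function.update (Function.update x l z') k y) t
          + H F (Function.update (Function.update x l z') k y') t)|
      ≤ (FLip / n) * max 0 (min (max z z') (max y y') - max (min z z') (min y y')) := by
  have hlk : l ∈ Finset.univ.erase k := Finset.mem_erase.2 ⟨Ne.symm hkl, Finset.mem_univ l⟩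
  have hpt : ∀ t, |H F (Function.update (Function.update x l z) k y) t
      - H F (Function.update (Function.update x l z) k y') t
      - H F (Function.update (Function.update x l z') k y) t
      + H F (Function.update (Function.update x l z') k y') t|
      ≤ (FLip / n) * χI (max (min z z') (min y y')) (min (max z z') (max y y')) t := by
    intro t
    have hMle : (((Finset.univ.erase k).erase l).filter fun j => t < x j).card + 2 ≤ n := by
      have h1 : (((Finset.univ.erase k).erase l).filter fun j => t < x j).card
          ≤ ((Finset.univ.erase k).erase l).card := Finset.card_filter_le _ _
      have h2 : ((Finset.univ.erase k).erase l).card = n - 1 - 1 := by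
        rw [Finset.card_erase_of_mem hlk,
          Finset.card_erase_of_mem (Finset.mem_univ k), Finset.card_univ, Fintype.card_fin]
      omega
    have einner : ∀ a : ℝ, ((Finset.univ.erase k).filter fun j => t < Function.update x l a j).card
        = (((Finset.univ.erase k).erase l).filter fun j => t < x j).card
          + (if t < a then 1 else 0) := fun a => cnt_update hlk x a t
    have e : ∀ (a b : ℝ), Ncnt (Function.update (Function.update x l a) k b) t
        = (((Finset.univ.erase k).erase l).filter fun j => t < x j).card
          + (if t < a then 1 else 0) + (if t < b then 1 else 0) := by
      intro a b
      rw [show Ncnt (Function.update (Function.update x l a) k b) t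
          = (Finset.univ.filter fun j => t < Function.update (Function.update x l a) k b j).card
          from rfl,
        cnt_update (Finset.mem_univ k) (Function.update x l a) b t, einner a]
    rw [H_eq_g, H_eq_g, H_eq_g, H_eq_g, e z y, e z y', e z' y, e z' y']
    exact second_pointwise F FLip hFlip hFlip0 hMle y y' z z' t
  have h1 := intervalIntegrable_H F (Function.update (Function.update x l z) k y)
  have h2 := intervalIntegrable_H F (Function.update (Function.update x l z) k y')
  have h3 := intervalIntegrable_H F (Function.update (Function.update x l z') k y)
  have h4 := intervalIntegrable_H F (Function.update (Function.update x l z') k y')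
  have hDint : IntervalIntegrable
      (fun t => H F (Function.update (Function.update x l z) k y) t
        - H F (Function.update (Function.update x l z) k y') t
        - H F (Function.update (Function.update x l z') k y) t
        + H F (Function.update (Function.update x l z') k y') t) volume 0 1 :=
    ((h1.sub h2).sub h3).add h4
  have hBint : IntervalIntegrable
      (fun t => (FLip / n) * χI (max (min z z') (min y y')) (min (max z z') (max y y')) t)
      volume 0 1 := (intervalIntegrable_χI _ _).const_mul _
  have ha : (0:ℝ) ≤ max (min z z') (min y y') :=
    le_trans (le_min hy.1 hy'.1) (le_max_right _ _)
  have hb : min (max z z') (max y y') ≤ 1 :=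
    le_trans (min_le_right _ _) (max_le hy.2 hy'.2)
  calc |∫ t in (0:ℝ)..1,
      (H F (Function.update (Function.update x l z) k y) t
        - H F (Function.update (Function.update x l z) k y') t
        - H F (Function.update (Function.update x l z') k y) t
        + H F (Function.update (Function.update x l z') k y') t)|
      ≤ ∫ t in (0:ℝ)..1, |H F (Function.update (Function.update x l z) k y) t
        - H F (Function.update (Function.update x l z) k y') t
        - H F (Function.update (Function.update x l z') k y) t
        + H F (Function.update (Function.update x l z') k y') t| :=
        intervalIntegral.abs_integral_le_integral_abs zero_le_one
    _ ≤ ∫ t in (0:ℝ)..1,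
        (FLip / n) * χI (max (min z z') (min y y')) (min (max z z') (max y y')) t :=
        intervalIntegral.integral_mono_on zero_le_one hDint.abs hBint (fun t _ => hpt t)
    _ = (FLip / n) * max 0 (min (max z z') (max y y') - max (min z z') (min y y')) := by
        rw [intervalIntegral.integral_const_mul, integral_χI ha hb]

end LstatAux

/-- Theorem 9 (Lipschitz L-statistics, pointwise bounds): for
`f(x) = (1/n) Σ_i F(i/n)·x_{(i)}` and coordinates in `[0,1]`,
`|D^k_{y,y'}f(x)| ≤ ‖F‖_∞·diam([[y,y']])/n` and
`|D^l_{z,z'}D^k_{y,y'}f(x)| ≤ ‖F‖_Lip·diam([[z,z']] ∩ [[y,y']])/n²`. -/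
theorem Lstatistic_pointwise_bounds {n : ℕ} (F : ℝ → ℝ) (Fsup FLip : ℝ)
    (hFsup : ∀ t ∈ Set.Icc (0 : ℝ) 1, |F t| ≤ Fsup)
    (hFlip : ∀ s ∈ Set.Icc (0 : ℝ) 1, ∀ t ∈ Set.Icc (0 : ℝ) 1, |F s - F t| ≤ FLip * |s - t|)
    (f : (Fin n → ℝ) → ℝ)
    (hf : f = fun x => (1 / (n : ℝ)) *
      ∑ i : Fin n, F (((i : ℕ) + 1) / n) * x (Tuple.sort x i))
    (x : Fin n → ℝ) (hx : ∀ i, x i ∈ Set.Icc (0 : ℝ) 1)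
    (k l : Fin n) (hkl : k ≠ l)
    (y y' z z' : ℝ) (hy : y ∈ Set.Icc (0 : ℝ) 1) (hy' : y' ∈ Set.Icc (0 : ℝ) 1)
    (hz : z ∈ Set.Icc (0 : ℝ) 1) (hz' : z' ∈ Set.Icc (0 : ℝ) 1) :
    |partialDiff f k y y' x| ≤ Fsup * |y - y'| / n ∧
      |partialDiff (partialDiff f k y y') l z z' x| ≤
        FLip * max 0 (min (max z z') (max y y') - max (min z z') (min y y')) / n ^ 2 := by
  classical
  have hkval : (k:ℕ) ≠ (l:ℕ) := fun h => hkl (Fin.ext h)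
  have hk := k.isLt
  have hl := l.isLt
  have hn2 : 2 ≤ n := by omega
  have hnR : (0:ℝ) < n := by exact_mod_cast (by omega : 0 < n)
  have hFsup0 : 0 ≤ Fsup := le_trans (abs_nonneg _) (hFsup 0 ⟨le_rfl, zero_le_one⟩)
  have hFlip0 : 0 ≤ FLip := by
    have h := hFlip 0 ⟨le_rfl, zero_le_one⟩ 1 ⟨zero_le_one, le_rfl⟩
    have h01 : |(0:ℝ) - 1| = 1 := by norm_num
    rw [h01, mul_one] at h
    exact le_trans (abs_nonneg _) h
  have hfS : ∀ w : Fin n → ℝ, (∀ j, w j ∈ Set.Icc (0:ℝ) 1) →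
      f w = (1/(n:ℝ)) * ∫ t in (0:ℝ)..1, LstatAux.H F w t := by
    intro w hw
    rw [hf]
    rw [LstatAux.integral_H F w hw]
  have hupd : ∀ (a : ℝ), a ∈ Set.Icc (0:ℝ) 1 → ∀ (m : Fin n) (v : Fin n → ℝ),
      (∀ j, v j ∈ Set.Icc (0:ℝ) 1) → ∀ j, Function.update v m a j ∈ Set.Icc (0:ℝ) 1 := by
    intro a ha m v hv j
    rw [Function.update_apply]
    split_ifs
    · exact ha
    · exact hv j
  constructor
  · -- first bound
    have hD : partialDiff f k y y' x
        = (1/(n:ℝ)) * ∫ t in (0:ℝ)..1,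
            (LstatAux.H F (Function.update x k y) t - LstatAux.H F (Function.update x k y') t) := by
      have : partialDiff f k y y' x
          = f (Function.update x k y) - f (Function.update x k y') := rfl
      rw [this, hfS _ (hupd y hy k x hx), hfS _ (hupd y' hy' k x hx),
        intervalIntegral.integral_sub (LstatAux.intervalIntegrable_H F _)
          (LstatAux.intervalIntegrable_H F _)]
      ring
    rw [hD, abs_mul, abs_of_nonneg (by positivity : (0:ℝ) ≤ 1/(n:ℝ))]
    calc (1/(n:ℝ)) * |∫ t in (0:ℝ)..1,
          (LstatAux.H F (Function.update x k y) t - LstatAux.H F (Function.update x k y') t)|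
        ≤ (1/(n:ℝ)) * (Fsup * |y - y'|) := by
          apply mul_le_mul_of_nonneg_left
            (LstatAux.part1 F Fsup hFsup hFsup0 (by omega) x k y y' hy hy')
            (by positivity)
      _ = Fsup * |y - y'| / n := by ring
  · -- second bound
    have hD : partialDiff (partialDiff f k y y') l z z' x
        = (1/(n:ℝ)) * ∫ t in (0:ℝ)..1,
            (LstatAux.H F (Function.update (Function.update x l z) k y) t
              - LstatAux.H F (Function.update (Function.update x l z) k y') t
              - LstatAux.H F (Function.update (Function.update x l z') k y) t
              + LstatAux.H F (Function.update (Function.update x l z') k y') t) := by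
      have hrfl : partialDiff (partialDiff f k y y') l z z' x
          = (f (Function.update (Function.update x l z) k y)
              - f (Function.update (Function.update x l z) k y'))
            - (f (Function.update (Function.update x l z') k y)
              - f (Function.update (Function.update x l z') k y')) := rfl
      have hv1 := hupd y hy k _ (hupd z hz l x hx)
      have hv2 := hupd y' hy' k _ (hupd z hz l x hx)
      have hv3 := hupd y hy k _ (hupd z' hz' l x hx)
      have hv4 := hupd y' hy' k _ (hupd z' hz' l x hx)
      have i1 := LstatAux.intervalIntegrable_H F (Function.update (Function.update x l z) k y)
      have i2 := LstatAux.intervalIntegrable_H F (Function.update (Function.update x l z) k y')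
      have i3 := LstatAux.intervalIntegrable_H F (Function.update (Function.update x l z') k y)
      have i4 := LstatAux.intervalIntegrable_H F (Function.update (Function.update x l z') k y')
      rw [hrfl, hfS _ hv1, hfS _ hv2, hfS _ hv3, hfS _ hv4,
        intervalIntegral.integral_add ((i1.sub i2).sub i3) i4,
        intervalIntegral.integral_sub (i1.sub i2) i3,
        intervalIntegral.integral_sub i1 i2]
      ring
    rw [hD, abs_mul, abs_of_nonneg (by positivity : (0:ℝ) ≤ 1/(n:ℝ))]
    calc (1/(n:ℝ)) * |∫ t in (0:ℝ)..1,
          (LstatAux.H F (Function.update (Function.update x l z) k y) t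
            - LstatAux.H F (Function.update (Function.update x l z) k y') t
            - LstatAux.H F (Function.update (Function.update x l z') k y) t
            + LstatAux.H F (Function.update (Function.update x l z') k y') t)|
        ≤ (1/(n:ℝ)) * ((FLip / n) * max 0
            (min (max z z') (max y y') - max (min z z') (min y y'))) := by
          apply mul_le_mul_of_nonneg_left
            (LstatAux.part2 F FLip hFlip hFlip0 hn2 x k l hkl y y' z z' hy hy' hz hz')
            (by positivity)
      _ = FLip * max 0 (min (max z z') (max y y') - max (min z z') (min y y')) / n ^ 2 := by
          ring
end

section
/- Let F : [0,1] → ℝ be Lipschitz with supremum norm ‖F‖_∞ and Lipschitz constant ‖F‖_Lip, and define f : [0,1]ⁿ → ℝ by f(x) = (1/n) Σ_{i=1}ⁿ F(i/n)·x_{(i)}, where x_{(1)} ≤ … ≤ x_{(n)} is the order statistic of x. Then M(f) ≤ ‖F‖_∞/n and J(f) ≤ ‖F‖_Lip/n; that is, f has (‖F‖_∞, ‖F‖_Lip)-weak interactions. -/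
open MeasureTheory ProbabilityTheory

noncomputable def Hf (n : ℕ) (F : ℝ → ℝ) (m : ℕ) : ℝ :=
  ∑ i ∈ Finset.univ.filter (fun i : Fin n => n - (i : ℕ) ≤ m), F (((i : ℕ) + 1) / (n : ℝ)) / n

lemma Hf_step (n : ℕ) (F : ℝ → ℝ) (m : ℕ) (hm : m < n) :
    Hf n F (m + 1) = Hf n F m + F (((n - m : ℕ) : ℝ) / (n : ℝ)) / n := by
  have hi : n - m - 1 < n := by omega
  have hset : (Finset.univ.filter (fun i : Fin n => n - (i : ℕ) ≤ m + 1))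
      = insert ⟨n - m - 1, hi⟩ (Finset.univ.filter (fun i : Fin n => n - (i : ℕ) ≤ m)) := by
    ext i
    simp only [Finset.mem_filter, Finset.mem_univ, true_and, Finset.mem_insert, Fin.ext_iff]
    have := i.2
    omega
  have hnotmem : (⟨n - m - 1, hi⟩ : Fin n) ∉
      (Finset.univ.filter (fun i : Fin n => n - (i : ℕ) ≤ m)) := by
    simp only [Finset.mem_filter, Finset.mem_univ, true_and]
    omega
  rw [Hf, hset, Finset.sum_insert hnotmem, Hf]
  have harg : ((n - m - 1 : ℕ) : ℝ) + 1 = ((n - m : ℕ) : ℝ) := by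
    have h1 : n - m - 1 + 1 = n - m := by omega
    exact_mod_cast congrArg (Nat.cast : ℕ → ℝ) h1
  simp only [Fin.val_mk]
  rw [harg]
  ring

lemma count_sorted (n : ℕ) (g : Fin n → ℝ) (t : ℝ) (i : Fin n) :
    t ≤ g (Tuple.sort g i) ↔ n - (i : ℕ) ≤ (Finset.univ.filter (fun j => t ≤ g j)).card := by
  set σ := Tuple.sort g with hσ
  have hmono : Monotone (g ∘ σ) := Tuple.monotone_sort g
  have hcard : (Finset.univ.filter (fun i : Fin n => t ≤ g (σ i))).card
      = (Finset.univ.filter (fun j => t ≤ g j)).card := by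
    apply Finset.card_bij (fun a _ => σ a)
    · intro a ha
      simp only [Finset.mem_filter, Finset.mem_univ, true_and] at ha ⊢
      exact ha
    · intro a _ b _ hab
      exact σ.injective hab
    · intro b hb
      refine ⟨σ.symm b, ?_, by simp⟩
      simp only [Finset.mem_filter, Finset.mem_univ, true_and] at hb ⊢
      simpa using hb
  rw [← hcard]
  constructor
  · intro h
    calc n - (i : ℕ) = (Finset.Ici i).card := Eq.symm (Fin.card_Ici i)
    _ ≤ _ := by
      apply Finset.card_le_card
      intro i' hi'
      simp only [Finset.mem_Ici] at hi'
      simp only [Finset.mem_filter, Finset.mem_univ, true_and]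
      exact le_trans h (hmono hi')
  · intro h
    by_contra hc
    push_neg at hc
    have hsub : (Finset.univ.filter (fun i' : Fin n => t ≤ g (σ i'))) ⊆ Finset.Ioi i := by
      intro i' hi'
      simp only [Finset.mem_filter, Finset.mem_univ, true_and] at hi'
      simp only [Finset.mem_Ioi]
      by_contra hle
      push_neg at hle
      exact absurd hi' (not_le.mpr (lt_of_le_of_lt (hmono hle) hc))
    have := Finset.card_le_card hsub
    rw [Fin.card_Ioi] at this
    have := i.2
    omega


lemma count_update {n : ℕ} (g : Fin n → ℝ) (s : Finset (Fin n)) (k : Fin n) (hk : k ∈ s)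
    (c t : ℝ) :
    (s.filter (fun j => t ≤ Function.update g k c j)).card
      = ((s.erase k).filter (fun j => t ≤ g j)).card + (if t ≤ c then 1 else 0) := by
  conv_lhs => rw [← Finset.insert_erase hk]
  rw [Finset.filter_insert]
  have hfc : (s.erase k).filter (fun j => t ≤ Function.update g k c j)
      = (s.erase k).filter (fun j => t ≤ g j) :=
    Finset.filter_congr (fun j hj => by
      rw [Function.update_of_ne (Finset.ne_of_mem_erase hj)])
  by_cases h : t ≤ c
  · rw [if_pos (by simpa using h), Finset.card_insert_of_notMem (by simp), hfc, if_pos h]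
  · rw [if_neg (by simpa using h), hfc, if_neg h, add_zero]

lemma f_rep {n : ℕ} (F : ℝ → ℝ) (g : Fin n → ℝ) (hg : ∀ j, g j ∈ Set.Icc (0:ℝ) 1) :
    (1 / (n:ℝ)) * ∑ i : Fin n, F (((i:ℕ)+1)/(n:ℝ)) * g (Tuple.sort g i)
      = ∫ t in Set.Ioc (0:ℝ) 1,
          Hf n F ((Finset.univ.filter (fun j => t ≤ g j)).card) := by
  set σ := Tuple.sort g with hσ
  have hcong : ∀ t ∈ Set.Ioc (0:ℝ) 1,
      Hf n F ((Finset.univ.filter (fun j => t ≤ g j)).card)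
        = ∑ i : Fin n,
            Set.indicator (Set.Ioc 0 (g (σ i))) (fun _ => F (((i:ℕ)+1)/(n:ℝ)) / n) t := by
    intro t ht
    rw [Hf, Finset.sum_filter]
    refine Finset.sum_congr rfl (fun i _ => ?_)
    rw [Set.indicator_apply]
    have : (n - (i:ℕ) ≤ (Finset.univ.filter (fun j => t ≤ g j)).card) ↔ t ∈ Set.Ioc 0 (g (σ i)) := by
      rw [← count_sorted n g t i]
      constructor
      · exact fun h => ⟨ht.1, h⟩
      · exact fun h => h.2
    simp only [this]
  rw [setIntegral_congr_fun measurableSet_Ioc hcong]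
  have hint : ∀ i : Fin n, IntegrableOn
      (fun t => Set.indicator (Set.Ioc 0 (g (σ i))) (fun _ => F (((i:ℕ)+1)/(n:ℝ)) / n) t)
      (Set.Ioc (0:ℝ) 1) volume := by
    intro i
    exact (Integrable.indicator (integrableOn_const measure_Ioc_lt_top.ne)
      measurableSet_Ioc)
  rw [integral_finset_sum _ (fun i _ => hint i)]
  rw [Finset.mul_sum]
  refine Finset.sum_congr rfl (fun i _ => ?_)
  rw [setIntegral_indicator measurableSet_Ioc]
  have h1 : Set.Ioc (0:ℝ) 1 ∩ Set.Ioc 0 (g (σ i)) = Set.Ioc 0 (g (σ i)) := by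
    rw [Set.Ioc_inter_Ioc]
    simp [min_eq_right (hg (σ i)).2]
  rw [h1, setIntegral_const, Real.volume_real_Ioc_of_le (hg (σ i)).1, sub_zero,
    smul_eq_mul]
  ring


lemma key1 {n : ℕ} (F : ℝ → ℝ) (Fsup : ℝ)
    (hFsup : ∀ t ∈ Set.Icc (0 : ℝ) 1, |F t| ≤ Fsup)
    (b u v : ℕ) (hb : b + 1 ≤ n) (hu : u ≤ 1) (hv : v ≤ 1) :
    |Hf n F (b + u) - Hf n F (b + v)| ≤ Fsup / n := by
  have hn : 0 < n := by omega
  have hnR : (0:ℝ) < n := by exact_mod_cast hn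
  have hF0 : 0 ≤ Fsup := le_trans (abs_nonneg _) (hFsup 0 ⟨le_rfl, zero_le_one⟩)
  have hc : 0 ≤ Fsup / n := div_nonneg hF0 (le_of_lt hnR)
  have hmem : ((n - b : ℕ) : ℝ) / n ∈ Set.Icc (0:ℝ) 1 := by
    constructor
    · positivity
    · rw [div_le_one hnR]
      exact_mod_cast Nat.sub_le n b
  have hmain : |Hf n F (b + 1) - Hf n F b| ≤ Fsup / n := by
    rw [Hf_step n F b (by omega), add_sub_cancel_left, abs_div, abs_of_pos hnR]
    gcongr
    exact hFsup _ hmem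
  rw [abs_le] at hmain ⊢
  interval_cases u <;> interval_cases v <;> (try simp only [Nat.add_zero] at *) <;>
    constructor <;> linarith [hmain.1, hmain.2]

lemma key2 {n : ℕ} (F : ℝ → ℝ) (FLip : ℝ)
    (hFlip : ∀ s ∈ Set.Icc (0 : ℝ) 1, ∀ t ∈ Set.Icc (0 : ℝ) 1, |F s - F t| ≤ FLip * |s - t|)
    (b u v u' v' : ℕ) (hb : b + 2 ≤ n) (hu : u ≤ 1) (hv : v ≤ 1) (hu' : u' ≤ 1) (hv' : v' ≤ 1) :
    |(Hf n F (b + u + v) - Hf n F (b + u + v')) -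
      (Hf n F (b + u' + v) - Hf n F (b + u' + v'))| ≤ FLip / n ^ 2 := by
  have hn : 0 < n := by omega
  have hnR : (0:ℝ) < n := by exact_mod_cast hn
  have hL0 : 0 ≤ FLip := by
    have h := hFlip 0 ⟨le_rfl, zero_le_one⟩ 1 ⟨zero_le_one, le_rfl⟩
    rw [show |(0:ℝ) - 1| = 1 by norm_num, mul_one] at h
    linarith [abs_nonneg (F 0 - F 1)]
  have hc : 0 ≤ FLip / n ^ 2 := by positivity
  have ha : ((n - (b+1) : ℕ) : ℝ) = (n:ℝ) - b - 1 := by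
    push_cast [Nat.cast_sub (show b + 1 ≤ n by omega)]; ring
  have ha' : ((n - b : ℕ) : ℝ) = (n:ℝ) - b := by
    push_cast [Nat.cast_sub (show b ≤ n by omega)]; ring
  have hbR : (b:ℝ) + 2 ≤ n := by exact_mod_cast hb
  have hm1 : ((n:ℝ) - b - 1) / n ∈ Set.Icc (0:ℝ) 1 := by
    constructor
    · apply div_nonneg _ hnR.le; linarith
    · rw [div_le_one hnR]; linarith
  have hm2 : ((n:ℝ) - b) / n ∈ Set.Icc (0:ℝ) 1 := by
    constructor
    · apply div_nonneg _ hnR.le; linarith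
    · rw [div_le_one hnR]; linarith
  have hmain : |(Hf n F (b + 1 + 1) - Hf n F (b + 1)) - (Hf n F (b + 1) - Hf n F b)|
      ≤ FLip / n ^ 2 := by
    rw [Hf_step n F (b+1) (by omega), Hf_step n F b (by omega), add_sub_cancel_left,
      add_sub_cancel_left, ha, ha', div_sub_div_same, abs_div, abs_of_pos hnR]
    have h := hFlip _ hm1 _ hm2
    have harg : |((n:ℝ) - b - 1)/n - ((n:ℝ) - b)/n| = 1 / n := by
      rw [div_sub_div_same]
      rw [show (n:ℝ) - b - 1 - ((n:ℝ) - b) = -1 by ring]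
      rw [abs_div, abs_of_pos hnR, abs_neg, abs_one]
    rw [harg] at h
    calc |F (((n:ℝ) - b - 1)/n) - F (((n:ℝ) - b)/n)| / n
        ≤ (FLip * (1/n)) / n := by gcongr
      _ = FLip / n ^ 2 := by rw [mul_one_div, div_div, ← pow_two]
  rw [abs_le] at hmain ⊢
  interval_cases u <;> interval_cases v <;> interval_cases u' <;> interval_cases v' <;>
    (try simp only [Nat.add_zero] at *) <;> constructor <;> linarith [hmain.1, hmain.2]

lemma meas_count {n : ℕ} (s : Finset (Fin n)) (g : Fin n → ℝ) :
    Measurable (fun t => (s.filter (fun j => t ≤ g j)).card) := by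
  have h : (fun t => (s.filter (fun j => t ≤ g j)).card)
      = fun t => ∑ j ∈ s, if t ≤ g j then 1 else 0 := by
    funext t; rw [Finset.card_filter]
  rw [h]
  exact Finset.measurable_sum s (fun j _ =>
    Measurable.ite measurableSet_Iic measurable_const measurable_const)

lemma meas_ite (c : ℝ) (d : ℕ) : Measurable (fun t : ℝ => if t ≤ c then d else 0) :=
  Measurable.ite measurableSet_Iic measurable_const measurable_const

lemma Hf_integrable {n : ℕ} (F : ℝ → ℝ) (φ : ℝ → ℕ) (hφ : Measurable φ) :
    IntegrableOn (fun t => Hf n F (φ t)) (Set.Ioc (0:ℝ) 1) volume := by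
  have hb : ∀ m, |Hf n F m| ≤ ∑ i : Fin n, |F (((i:ℕ)+1)/(n:ℝ)) / n| := by
    intro m
    calc |Hf n F m| ≤ ∑ i ∈ Finset.univ.filter (fun i : Fin n => n - (i:ℕ) ≤ m),
          |F (((i:ℕ)+1)/(n:ℝ)) / n| := Finset.abs_sum_le_sum_abs _ _
      _ ≤ _ := Finset.sum_le_sum_of_subset_of_nonneg (Finset.filter_subset _ _)
          (fun _ _ _ => abs_nonneg _)
  have h1 : IntegrableOn (fun _ : ℝ => ∑ i : Fin n, |F (((i:ℕ)+1)/(n:ℝ)) / n|)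
      (Set.Ioc (0:ℝ) 1) volume :=
    integrableOn_const (by rw [Real.volume_Ioc]; exact ENNReal.ofReal_ne_top)
  have h2 : Measurable (fun t => Hf n F (φ t)) := (measurable_from_nat (f := Hf n F)).comp hφ
  exact h1.mono' h2.aestronglyMeasurable (Filter.Eventually.of_forall (fun t => by
      simpa [Real.norm_eq_abs] using hb (φ t)))

/-- Lipschitz L-statistics have `(‖F‖_∞, ‖F‖_Lip)`-weak interactions:
`M(f) ≤ ‖F‖_∞/n` and `J(f) ≤ ‖F‖_Lip/n` for `f(x) = (1/n) Σ_i F(i/n)·x_{(i)}` on `[0,1]ⁿ`. -/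
theorem Lstatistic_weak_interactions {n : ℕ} (F : ℝ → ℝ) (Fsup FLip : ℝ)
    (hFsup : ∀ t ∈ Set.Icc (0 : ℝ) 1, |F t| ≤ Fsup)
    (hFlip : ∀ s ∈ Set.Icc (0 : ℝ) 1, ∀ t ∈ Set.Icc (0 : ℝ) 1, |F s - F t| ≤ FLip * |s - t|)
    (f : (Fin n → Set.Icc (0 : ℝ) 1) → ℝ)
    (hf : f = fun x => (1 / (n : ℝ)) *
      ∑ i : Fin n, F (((i : ℕ) + 1) / n) *
        (fun j => (x j : ℝ)) (Tuple.sort (fun j => (x j : ℝ)) i)) :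
    Msem f ≤ Fsup / n ∧ Jsem f ≤ FLip / n := by
  have hFsup0 : 0 ≤ Fsup := le_trans (abs_nonneg _) (hFsup 0 ⟨le_rfl, zero_le_one⟩)
  have hFlip0 : 0 ≤ FLip := by
    have h := hFlip 0 ⟨le_rfl, zero_le_one⟩ 1 ⟨zero_le_one, le_rfl⟩
    rw [show |(0:ℝ) - 1| = 1 by norm_num, mul_one] at h
    linarith [abs_nonneg (F 0 - F 1)]
  have hMn : 0 ≤ Fsup / (n:ℝ) := div_nonneg hFsup0 (Nat.cast_nonneg n)
  have hJn2 : 0 ≤ FLip / (n:ℝ)^2 := by positivity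
  have hvol : volume (Set.Ioc (0:ℝ) 1) < ⊤ := by
    rw [Real.volume_Ioc]; exact ENNReal.ofReal_lt_top
  have hfrep : ∀ x : Fin n → Set.Icc (0:ℝ) 1,
      f x = ∫ t in Set.Ioc (0:ℝ) 1,
        Hf n F ((Finset.univ.filter (fun j => t ≤ ((x j : ℝ)))).card) := by
    intro x
    rw [hf]
    exact f_rep F (fun j => (x j : ℝ)) (fun j => (x j).2)
  have hcoe : ∀ (x : Fin n → Set.Icc (0:ℝ) 1) (k : Fin n) (y : Set.Icc (0:ℝ) 1) (j : Fin n),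
      ((Function.update x k y j : Set.Icc (0:ℝ) 1) : ℝ)
        = Function.update (fun j => ((x j : ℝ))) k (y : ℝ) j :=
    fun x k y j => Function.apply_update (fun (_ : Fin n) (s : Set.Icc (0:ℝ) 1) => (s : ℝ)) x k y j
  have hrep1 : ∀ (x : Fin n → Set.Icc (0:ℝ) 1) (k : Fin n) (y : Set.Icc (0:ℝ) 1),
      f (Function.update x k y) = ∫ t in Set.Ioc (0:ℝ) 1,
        Hf n F (((Finset.univ.erase k).filter (fun j => t ≤ ((x j : ℝ)))).card
          + (if t ≤ (y:ℝ) then 1 else 0)) := by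
    intro x k y
    rw [hfrep]
    refine setIntegral_congr_fun measurableSet_Ioc (fun t _ => ?_)
    congr 1
    simp only [hcoe]
    exact count_update (fun j => ((x j : ℝ))) Finset.univ k (Finset.mem_univ k) (y:ℝ) t
  constructor
  · -- M bound
    refine Real.iSup_le (fun k => Real.iSup_le (fun x => Real.iSup_le (fun y =>
      Real.iSup_le (fun y' => ?_) hMn) hMn) hMn) hMn
    have hn : 0 < n := k.pos
    set A : ℝ → ℕ :=
      fun t => ((Finset.univ.erase k).filter (fun j => t ≤ ((x j : ℝ)))).card with hA
    have hAmeas : Measurable A := meas_count _ _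
    have hAle : ∀ t, A t + 1 ≤ n := by
      intro t
      have h1 : A t ≤ (Finset.univ.erase k).card := Finset.card_filter_le _ _
      rw [Finset.card_erase_of_mem (Finset.mem_univ k), Finset.card_univ,
        Fintype.card_fin] at h1
      omega
    have hint : ∀ (y0 : Set.Icc (0:ℝ) 1), IntegrableOn
        (fun t => Hf n F (A t + if t ≤ (y0:ℝ) then 1 else 0)) (Set.Ioc (0:ℝ) 1) volume :=
      fun y0 => Hf_integrable F _ (hAmeas.add (meas_ite _ 1))
    simp only [partialDiff]
    rw [hrep1, hrep1, ← integral_sub (hint y) (hint y')]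
    calc (∫ t in Set.Ioc (0:ℝ) 1, (Hf n F (A t + if t ≤ (y:ℝ) then 1 else 0)
            - Hf n F (A t + if t ≤ (y':ℝ) then 1 else 0)))
        ≤ |∫ t in Set.Ioc (0:ℝ) 1, (Hf n F (A t + if t ≤ (y:ℝ) then 1 else 0)
            - Hf n F (A t + if t ≤ (y':ℝ) then 1 else 0))| := le_abs_self _
      _ = ‖∫ t in Set.Ioc (0:ℝ) 1, (Hf n F (A t + if t ≤ (y:ℝ) then 1 else 0)
            - Hf n F (A t + if t ≤ (y':ℝ) then 1 else 0))‖ := (Real.norm_eq_abs _).symm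
      _ ≤ (Fsup / n) * (volume (Set.Ioc (0:ℝ) 1)).toReal :=
          norm_setIntegral_le_of_norm_le_const_ae hvol
            (Filter.Eventually.of_forall (fun t => by
              rw [Real.norm_eq_abs]
              exact key1 F Fsup hFsup (A t) (if t ≤ (y:ℝ) then 1 else 0)
                (if t ≤ (y':ℝ) then 1 else 0) (hAle t)
                (by split <;> omega) (by split <;> omega)))
      _ = Fsup / n := by rw [Real.volume_Ioc]; norm_num
  · -- J bound
    have hS : (⨆ k : Fin n, ⨆ l : Fin n, ⨆ _ : l ≠ k, ⨆ x : Fin n → Set.Icc (0:ℝ) 1,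
        ⨆ z : Set.Icc (0:ℝ) 1, ⨆ z' : Set.Icc (0:ℝ) 1, ⨆ y : Set.Icc (0:ℝ) 1,
        ⨆ y' : Set.Icc (0:ℝ) 1, partialDiff (partialDiff f k y y') l z z' x)
          ≤ FLip / (n:ℝ)^2 := by
      refine Real.iSup_le (fun k => Real.iSup_le (fun l => Real.iSup_le (fun hlk =>
        Real.iSup_le (fun x => Real.iSup_le (fun z => Real.iSup_le (fun z' =>
        Real.iSup_le (fun y => Real.iSup_le (fun y' => ?_) hJn2) hJn2) hJn2) hJn2)
        hJn2) hJn2) hJn2) hJn2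
      have hn2 : 2 ≤ n := by
        have h1 : (l:ℕ) ≠ (k:ℕ) := fun h => hlk (Fin.ext h)
        have := l.2; have := k.2; omega
      have hlk' : l ∈ Finset.univ.erase k := Finset.mem_erase.mpr ⟨hlk, Finset.mem_univ l⟩
      set B : ℝ → ℕ :=
        fun t => (((Finset.univ.erase k).erase l).filter (fun j => t ≤ ((x j : ℝ)))).card
        with hB
      have hBmeas : Measurable B := meas_count _ _
      have hBle : ∀ t, B t + 2 ≤ n := by
        intro t
        have h1 : B t ≤ ((Finset.univ.erase k).erase l).card := Finset.card_filter_le _ _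
        rw [Finset.card_erase_of_mem hlk', Finset.card_erase_of_mem (Finset.mem_univ k),
          Finset.card_univ, Fintype.card_fin] at h1
        omega
      have hrep2 : ∀ (w v : Set.Icc (0:ℝ) 1),
          f (Function.update (Function.update x l w) k v)
            = ∫ t in Set.Ioc (0:ℝ) 1, Hf n F (B t + (if t ≤ (w:ℝ) then 1 else 0)
                + (if t ≤ (v:ℝ) then 1 else 0)) := by
        intro w v
        rw [hrep1]
        refine setIntegral_congr_fun measurableSet_Ioc (fun t _ => ?_)
        congr 2
        simp only [hcoe]
        exact count_update (fun j => ((x j : ℝ))) (Finset.univ.erase k) l hlk' (w:ℝ) t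
      have hint : ∀ (w v : Set.Icc (0:ℝ) 1), IntegrableOn
          (fun t => Hf n F (B t + (if t ≤ (w:ℝ) then 1 else 0)
            + (if t ≤ (v:ℝ) then 1 else 0))) (Set.Ioc (0:ℝ) 1) volume :=
        fun w v => Hf_integrable F _ ((hBmeas.add (meas_ite _ 1)).add (meas_ite _ 1))
      have hsub1 : IntegrableOn (fun t =>
          Hf n F (B t + (if t ≤ (z:ℝ) then 1 else 0) + (if t ≤ (y:ℝ) then 1 else 0))
          - Hf n F (B t + (if t ≤ (z:ℝ) then 1 else 0) + (if t ≤ (y':ℝ) then 1 else 0)))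
          (Set.Ioc (0:ℝ) 1) volume := (hint z y).sub (hint z y')
      have hsub2 : IntegrableOn (fun t =>
          Hf n F (B t + (if t ≤ (z':ℝ) then 1 else 0) + (if t ≤ (y:ℝ) then 1 else 0))
          - Hf n F (B t + (if t ≤ (z':ℝ) then 1 else 0) + (if t ≤ (y':ℝ) then 1 else 0)))
          (Set.Ioc (0:ℝ) 1) volume := (hint z' y).sub (hint z' y')
      simp only [partialDiff]
      rw [hrep2, hrep2, hrep2, hrep2,
        ← integral_sub (hint z y) (hint z y'), ← integral_sub (hint z' y) (hint z' y'),
        ← integral_sub hsub1 hsub2]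
      calc (∫ t in Set.Ioc (0:ℝ) 1,
              ((Hf n F (B t + (if t ≤ (z:ℝ) then 1 else 0) + (if t ≤ (y:ℝ) then 1 else 0))
                - Hf n F (B t + (if t ≤ (z:ℝ) then 1 else 0) + (if t ≤ (y':ℝ) then 1 else 0)))
              - (Hf n F (B t + (if t ≤ (z':ℝ) then 1 else 0) + (if t ≤ (y:ℝ) then 1 else 0))
                - Hf n F (B t + (if t ≤ (z':ℝ) then 1 else 0) + (if t ≤ (y':ℝ) then 1 else 0)))))
          ≤ |∫ t in Set.Ioc (0:ℝ) 1,
              ((Hf n F (B t + (if t ≤ (z:ℝ) then 1 else 0) + (if t ≤ (y:ℝ) then 1 else 0))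
                - Hf n F (B t + (if t ≤ (z:ℝ) then 1 else 0) + (if t ≤ (y':ℝ) then 1 else 0)))
              - (Hf n F (B t + (if t ≤ (z':ℝ) then 1 else 0) + (if t ≤ (y:ℝ) then 1 else 0))
                - Hf n F (B t + (if t ≤ (z':ℝ) then 1 else 0) + (if t ≤ (y':ℝ) then 1 else 0))))|
            := le_abs_self _
        _ = ‖∫ t in Set.Ioc (0:ℝ) 1,
              ((Hf n F (B t + (if t ≤ (z:ℝ) then 1 else 0) + (if t ≤ (y:ℝ) then 1 else 0))
                - Hf n F (B t + (if t ≤ (z:ℝ) then 1 else 0) + (if t ≤ (y':ℝ) then 1 else 0)))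
              - (Hf n F (B t + (if t ≤ (z':ℝ) then 1 else 0) + (if t ≤ (y:ℝ) then 1 else 0))
                - Hf n F (B t + (if t ≤ (z':ℝ) then 1 else 0) + (if t ≤ (y':ℝ) then 1 else 0))))‖
            := (Real.norm_eq_abs _).symm
        _ ≤ (FLip / (n:ℝ)^2) * (volume (Set.Ioc (0:ℝ) 1)).toReal :=
            norm_setIntegral_le_of_norm_le_const_ae hvol
              (Filter.Eventually.of_forall (fun t => by
                rw [Real.norm_eq_abs]
                exact key2 F FLip hFlip (B t) (if t ≤ (z:ℝ) then 1 else 0)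
                  (if t ≤ (y:ℝ) then 1 else 0) (if t ≤ (z':ℝ) then 1 else 0)
                  (if t ≤ (y':ℝ) then 1 else 0) (hBle t)
                  (by split <;> omega) (by split <;> omega)
                  (by split <;> omega) (by split <;> omega)))
        _ = FLip / (n:ℝ)^2 := by rw [Real.volume_Ioc]; norm_num
    rw [Jsem]
    calc (n:ℝ) * _ ≤ (n:ℝ) * (FLip / (n:ℝ)^2) :=
          mul_le_mul_of_nonneg_left hS (Nat.cast_nonneg n)
      _ ≤ FLip / n := by
        rcases eq_or_ne (n:ℝ) 0 with h | h
        · simp [h]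
        · have : (n:ℝ) * (FLip / (n:ℝ)^2) = FLip / n := by field_simp
          rw [this]
end

section
/- Let (Ω, ρ) be a finite measure space with ρ(Ω) > 0 and β > 0. Define Ξ on the closed unit ball 𝔹₁ of L^∞(Ω, ρ) by Ξ(G) = ln ∫_Ω e^{−β·G(ω)} dρ(ω). Then Ξ is twice Fréchet-differentiable on 𝔹₁ with Ξ′(G)[u] = −β·E_G[u] and Ξ″(G)[u][v] = β²·(E_G[u·v] − E_G[u]·E_G[v]), where E_G[h] = Z(G)^{−1} ∫_Ω h(ω)·e^{−β·G(ω)} dρ(ω) and Z(G) = ∫_Ω e^{−β·G(ω)} dρ(ω); consequently ‖Ξ′(G)‖ ≤ β and ‖Ξ″(G)‖ ≤ 2β² for every G ∈ 𝔹₁. -/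
open MeasureTheory ProbabilityTheory

/-- The partition function `Z(G) = ∫ e^{−βG} dρ` for `G ∈ L^∞(Ω,ρ)`. -/
noncomputable def gibbsZ {Ω : Type*} [MeasurableSpace Ω] (ρ : Measure Ω) (β : ℝ)
    (G : Lp ℝ ⊤ ρ) : ℝ :=
  ∫ ω, Real.exp (-β * G ω) ∂ρ

/-- The Gibbs expectation `E_G[h] = Z(G)⁻¹ ∫ h·e^{−βG} dρ`. -/
noncomputable def gibbsExp {Ω : Type*} [MeasurableSpace Ω] (ρ : Measure Ω) (β : ℝ)
    (G : Lp ℝ ⊤ ρ) (h : Ω → ℝ) : ℝ :=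
  (gibbsZ ρ β G)⁻¹ * ∫ ω, h ω * Real.exp (-β * G ω) ∂ρ

set_option linter.unusedSectionVars false
set_option linter.unreachableTactic false
set_option linter.unusedTactic false
set_option maxHeartbeats 1000000
open scoped ENNReal NNReal

namespace gA
variable {Ω : Type*} [MeasurableSpace Ω] {ρ : Measure Ω} [IsFiniteMeasure ρ] {β : ℝ}

variable {Ω : Type*} [MeasurableSpace Ω] {ρ : Measure Ω} [IsFiniteMeasure ρ] {β : ℝ}

lemma ae_abs_le (f : Lp ℝ ⊤ ρ) : ∀ᵐ ω ∂ρ, |f ω| ≤ ‖f‖ := by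
  have h1 : eLpNorm f ⊤ ρ ≠ ⊤ := Lp.eLpNorm_ne_top f
  filter_upwards [ae_le_eLpNormEssSup (f := (f : Ω → ℝ)) (μ := ρ)] with ω hω
  have : (‖f ω‖₊ : ℝ≥0∞) ≤ eLpNorm f ⊤ ρ := by rwa [eLpNorm_exponent_top]
  have := ENNReal.toReal_mono h1 this
  simpa [Lp.norm_def, Real.norm_eq_abs] using this

lemma meas_exp (β : ℝ) (G : Lp ℝ ⊤ ρ) :
    AEStronglyMeasurable (fun ω => Real.exp (-β * G ω)) ρ :=
  Real.continuous_exp.comp_aestronglyMeasurable ((Lp.aestronglyMeasurable G).const_mul (-β))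

lemma exp_le (β : ℝ) (G : Lp ℝ ⊤ ρ) :
    ∀ᵐ ω ∂ρ, Real.exp (-β * G ω) ≤ Real.exp (|β| * ‖G‖) := by
  filter_upwards [ae_abs_le G] with ω hω
  apply Real.exp_le_exp.2
  calc -β * G ω ≤ |(-β) * G ω| := le_abs_self _
    _ = |β| * |G ω| := by rw [abs_mul, abs_neg]
    _ ≤ |β| * ‖G‖ := by gcongr

lemma exp_ge (β : ℝ) (G : Lp ℝ ⊤ ρ) :
    ∀ᵐ ω ∂ρ, Real.exp (-(|β| * ‖G‖)) ≤ Real.exp (-β * G ω) := by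
  filter_upwards [ae_abs_le G] with ω hω
  apply Real.exp_le_exp.2
  have : -(-β * G ω) ≤ |β| * ‖G‖ := by
    calc -(-β * G ω) ≤ |(-β) * G ω| := neg_le_abs _
      _ = |β| * |G ω| := by rw [abs_mul, abs_neg]
      _ ≤ |β| * ‖G‖ := by gcongr
  linarith

lemma integ_exp (β : ℝ) (G : Lp ℝ ⊤ ρ) :
    Integrable (fun ω => Real.exp (-β * G ω)) ρ := by
  refine ⟨meas_exp β G, HasFiniteIntegral.of_bounded (C := Real.exp (|β| * ‖G‖)) ?_⟩
  filter_upwards [exp_le β G] with ω hω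
  rwa [Real.norm_eq_abs, abs_of_pos (Real.exp_pos _)]

lemma integ_mul_exp (β : ℝ) (G u : Lp ℝ ⊤ ρ) :
    Integrable (fun ω => u ω * Real.exp (-β * G ω)) ρ := by
  refine ⟨(Lp.aestronglyMeasurable u).mul (meas_exp β G),
    HasFiniteIntegral.of_bounded (C := ‖u‖ * Real.exp (|β| * ‖G‖)) ?_⟩
  filter_upwards [exp_le β G, ae_abs_le u] with ω h1 h2
  rw [Real.norm_eq_abs, abs_mul, abs_of_pos (Real.exp_pos _)]
  exact mul_le_mul h2 h1 (Real.exp_pos _).le (norm_nonneg _)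

lemma integ_mul_mul_exp (β : ℝ) (G u v : Lp ℝ ⊤ ρ) :
    Integrable (fun ω => u ω * v ω * Real.exp (-β * G ω)) ρ := by
  refine ⟨((Lp.aestronglyMeasurable u).mul (Lp.aestronglyMeasurable v)).mul (meas_exp β G),
    HasFiniteIntegral.of_bounded (C := ‖u‖ * ‖v‖ * Real.exp (|β| * ‖G‖)) ?_⟩
  filter_upwards [exp_le β G, ae_abs_le u, ae_abs_le v] with ω h1 h2 h3
  rw [Real.norm_eq_abs, abs_mul, abs_mul, abs_of_pos (Real.exp_pos _)]
  have : |u ω| * |v ω| ≤ ‖u‖ * ‖v‖ :=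
    mul_le_mul h2 h3 (abs_nonneg _) (norm_nonneg _)
  exact mul_le_mul this h1 (Real.exp_pos _).le (by positivity)

lemma Z_pos (hρ : ρ ≠ 0) (β : ℝ) (G : Lp ℝ ⊤ ρ) : 0 < gibbsZ ρ β G := by
  have h0 : 0 < (ρ Set.univ).toReal := by
    rw [ENNReal.toReal_pos_iff]
    exact ⟨Measure.measure_univ_pos.2 hρ, measure_lt_top ρ _⟩
  have : (ρ Set.univ).toReal * Real.exp (-(|β| * ‖G‖)) ≤ gibbsZ ρ β G := by
    rw [show (ρ Set.univ).toReal * Real.exp (-(|β| * ‖G‖))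
        = ∫ _, Real.exp (-(|β| * ‖G‖)) ∂ρ by rw [integral_const, smul_eq_mul]; rfl]
    exact integral_mono_ae (integrable_const _) (integ_exp β G) (exp_ge β G)
  calc (0:ℝ) < (ρ Set.univ).toReal * Real.exp (-(|β| * ‖G‖)) := by positivity
    _ ≤ _ := this

lemma J_bound (β : ℝ) (G u : Lp ℝ ⊤ ρ) :
    |∫ ω, u ω * Real.exp (-β * G ω) ∂ρ| ≤ ‖u‖ * gibbsZ ρ β G := by
  rw [← Real.norm_eq_abs]
  have h : ∀ᵐ ω ∂ρ, ‖u ω * Real.exp (-β * G ω)‖ ≤ ‖u‖ * Real.exp (-β * G ω) := by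
    filter_upwards [ae_abs_le u] with ω h2
    rw [Real.norm_eq_abs, abs_mul, abs_of_pos (Real.exp_pos _)]
    exact mul_le_mul_of_nonneg_right h2 (Real.exp_pos _).le
  calc ‖∫ ω, u ω * Real.exp (-β * G ω) ∂ρ‖
      ≤ ∫ ω, ‖u‖ * Real.exp (-β * G ω) ∂ρ :=
        norm_integral_le_of_norm_le ((integ_exp β G).const_mul _) h
    _ = ‖u‖ * gibbsZ ρ β G := by rw [integral_const_mul]; rfl

lemma B_bound (β : ℝ) (G u v : Lp ℝ ⊤ ρ) :
    |∫ ω, u ω * v ω * Real.exp (-β * G ω) ∂ρ| ≤ gibbsZ ρ β G * ‖u‖ * ‖v‖ := by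
  rw [← Real.norm_eq_abs]
  have h : ∀ᵐ ω ∂ρ, ‖u ω * v ω * Real.exp (-β * G ω)‖
      ≤ ‖u‖ * ‖v‖ * Real.exp (-β * G ω) := by
    filter_upwards [ae_abs_le u, ae_abs_le v] with ω h2 h3
    rw [Real.norm_eq_abs, abs_mul, abs_mul, abs_of_pos (Real.exp_pos _)]
    exact mul_le_mul_of_nonneg_right
      (mul_le_mul h2 h3 (abs_nonneg _) (norm_nonneg _)) (Real.exp_pos _).le
  calc ‖∫ ω, u ω * v ω * Real.exp (-β * G ω) ∂ρ‖
      ≤ ∫ ω, ‖u‖ * ‖v‖ * Real.exp (-β * G ω) ∂ρ :=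
        norm_integral_le_of_norm_le ((integ_exp β G).const_mul _) h
    _ = gibbsZ ρ β G * ‖u‖ * ‖v‖ := by rw [integral_const_mul]; unfold gibbsZ; ring




noncomputable def Jfun (ρ : Measure Ω) [IsFiniteMeasure ρ] (β : ℝ) (G : Lp ℝ ⊤ ρ) :
    Lp ℝ ⊤ ρ →L[ℝ] ℝ :=
  LinearMap.mkContinuous
    { toFun := fun u => ∫ ω, u ω * Real.exp (-β * G ω) ∂ρ
      map_add' := fun u v => by
        rw [← integral_add (integ_mul_exp β G u) (integ_mul_exp β G v)]
        refine integral_congr_ae ?_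
        filter_upwards [Lp.coeFn_add u v] with ω h
        rw [h, Pi.add_apply]; ring
      map_smul' := fun c u => by
        simp only [RingHom.id_apply, smul_eq_mul, ← integral_const_mul]
        refine integral_congr_ae ?_
        filter_upwards [Lp.coeFn_smul c u] with ω h
        rw [h, Pi.smul_apply, smul_eq_mul]; ring }
    (gibbsZ ρ β G)
    (fun u => by
      simpa [Real.norm_eq_abs, mul_comm] using J_bound β G u)

@[simp] lemma Jfun_apply (G u : Lp ℝ ⊤ ρ) :
    Jfun ρ β G u = ∫ ω, u ω * Real.exp (-β * G ω) ∂ρ := rfl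

noncomputable def Bfun (ρ : Measure Ω) [IsFiniteMeasure ρ] (β : ℝ) (G : Lp ℝ ⊤ ρ) :
    Lp ℝ ⊤ ρ →L[ℝ] Lp ℝ ⊤ ρ →L[ℝ] ℝ :=
  LinearMap.mkContinuous₂
    (LinearMap.mk₂ ℝ (fun u v => ∫ ω, u ω * v ω * Real.exp (-β * G ω) ∂ρ)
      (fun u u' v => by
        rw [← integral_add (integ_mul_mul_exp β G u v) (integ_mul_mul_exp β G u' v)]
        refine integral_congr_ae ?_
        filter_upwards [Lp.coeFn_add u u'] with ω h
        rw [h, Pi.add_apply]; ring)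
      (fun c u v => by
        simp only [smul_eq_mul, ← integral_const_mul]
        refine integral_congr_ae ?_
        filter_upwards [Lp.coeFn_smul c u] with ω h
        rw [h, Pi.smul_apply, smul_eq_mul]; ring)
      (fun u v v' => by
        rw [← integral_add (integ_mul_mul_exp β G u v) (integ_mul_mul_exp β G u v')]
        refine integral_congr_ae ?_
        filter_upwards [Lp.coeFn_add v v'] with ω h
        rw [h, Pi.add_apply]; ring)
      (fun c u v => by
        simp only [smul_eq_mul, ← integral_const_mul]
        refine integral_congr_ae ?_
        filter_upwards [Lp.coeFn_smul c v] with ω h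
        rw [h, Pi.smul_apply, smul_eq_mul]; ring))
    (gibbsZ ρ β G)
    (fun u v => by
      simpa [Real.norm_eq_abs] using B_bound β G u v)

@[simp] lemma Bfun_apply (G u v : Lp ℝ ⊤ ρ) :
    Bfun ρ β G u v = ∫ ω, u ω * v ω * Real.exp (-β * G ω) ∂ρ := rfl

lemma key_ae (G w : Lp ℝ ⊤ ρ) (hw : |β| * ‖w‖ ≤ 1) :
    ∀ᵐ ω ∂ρ, |Real.exp (-β * (G + w) ω) - Real.exp (-β * G ω)
        + β * w ω * Real.exp (-β * G ω)|
      ≤ β ^ 2 * ‖w‖ ^ 2 * Real.exp (|β| * ‖G‖) := by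
  filter_upwards [Lp.coeFn_add G w, ae_abs_le w, exp_le β G] with ω hadd hwle hGle
  set a := -β * G ω with ha
  set b := -β * w ω with hb
  have h1 : -β * (G + w) ω = a + b := by rw [hadd, Pi.add_apply]; ring
  have hble : |b| ≤ 1 := by
    calc |b| = |β| * |w ω| := by rw [hb, abs_mul, abs_neg]
      _ ≤ |β| * ‖w‖ := by gcongr
      _ ≤ 1 := hw
  have h2 : Real.exp (a + b) - Real.exp a + β * w ω * Real.exp a
      = Real.exp a * (Real.exp b - 1 - b) := by
    rw [Real.exp_add, hb]; ring
  rw [h1, h2, abs_mul, abs_of_pos (Real.exp_pos a)]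
  have h3 : |Real.exp b - 1 - b| ≤ b ^ 2 := Real.abs_exp_sub_one_sub_id_le hble
  have h4 : b ^ 2 ≤ β ^ 2 * ‖w‖ ^ 2 := by
    have : |b| ≤ |β| * ‖w‖ := by
      calc |b| = |β| * |w ω| := by rw [hb, abs_mul, abs_neg]
        _ ≤ |β| * ‖w‖ := by gcongr
    calc b ^ 2 = |b| ^ 2 := (sq_abs b).symm
      _ ≤ (|β| * ‖w‖) ^ 2 := by gcongr
      _ = β ^ 2 * ‖w‖ ^ 2 := by rw [mul_pow, sq_abs]
  calc Real.exp a * |Real.exp b - 1 - b| ≤ Real.exp (|β| * ‖G‖) * (β ^ 2 * ‖w‖ ^ 2) := by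
        exact mul_le_mul hGle (h3.trans h4) (abs_nonneg _) (Real.exp_pos _).le
    _ = β ^ 2 * ‖w‖ ^ 2 * Real.exp (|β| * ‖G‖) := by ring

lemma hasFDerivAt_Z (G : Lp ℝ ⊤ ρ) :
    HasFDerivAt (fun G' => gibbsZ ρ β G') ((-β) • Jfun ρ β G) G := by
  rw [hasFDerivAt_iff_isLittleO_nhds_zero, Asymptotics.isLittleO_iff]
  intro c hc
  set C : ℝ := β ^ 2 * Real.exp (|β| * ‖G‖) * (ρ Set.univ).toReal + 1 with hC
  have hCpos : 0 < C := by positivity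
  have hδ : 0 < min (|β| + 1)⁻¹ (c / C) := lt_min (by positivity) (by positivity)
  filter_upwards [Metric.ball_mem_nhds (0 : Lp ℝ ⊤ ρ) hδ] with w hwmem
  rw [mem_ball_zero_iff] at hwmem
  have hw1 : |β| * ‖w‖ ≤ 1 := by
    have h1 : ‖w‖ ≤ (|β| + 1)⁻¹ := (lt_of_lt_of_le hwmem (min_le_left _ _)).le
    calc |β| * ‖w‖ ≤ (|β| + 1) * (|β| + 1)⁻¹ := by
          apply mul_le_mul (by linarith [abs_nonneg β]) h1 (norm_nonneg _) (by positivity)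
      _ = 1 := mul_inv_cancel₀ (by positivity)
  have hw2 : ‖w‖ ≤ c / C := (lt_of_lt_of_le hwmem (min_le_right _ _)).le
  have e1 : (∫ ω, (Real.exp (-β * (G + w) ω) - Real.exp (-β * G ω)
          + β * w ω * Real.exp (-β * G ω)) ∂ρ)
      = gibbsZ ρ β (G + w) - gibbsZ ρ β G
        + β * ∫ ω, w ω * Real.exp (-β * G ω) ∂ρ := by
    calc (∫ ω, (Real.exp (-β * (G + w) ω) - Real.exp (-β * G ω)
            + β * w ω * Real.exp (-β * G ω)) ∂ρ)
        = ∫ ω, ((Real.exp (-β * (G + w) ω) - Real.exp (-β * G ω))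
            + β * (w ω * Real.exp (-β * G ω))) ∂ρ :=
          integral_congr_ae (Filter.Eventually.of_forall fun ω => by ring)
      _ = (∫ ω, (Real.exp (-β * (G + w) ω) - Real.exp (-β * G ω)) ∂ρ)
            + ∫ ω, β * (w ω * Real.exp (-β * G ω)) ∂ρ :=
          integral_add ((integ_exp β (G + w)).sub (integ_exp β G))
            ((integ_mul_exp β G w).const_mul β)
      _ = ((∫ ω, Real.exp (-β * (G + w) ω) ∂ρ) - ∫ ω, Real.exp (-β * G ω) ∂ρ)
            + β * ∫ ω, w ω * Real.exp (-β * G ω) ∂ρ := by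
          rw [integral_sub (integ_exp β (G + w)) (integ_exp β G), integral_const_mul]
      _ = gibbsZ ρ β (G + w) - gibbsZ ρ β G
            + β * ∫ ω, w ω * Real.exp (-β * G ω) ∂ρ := rfl
  have heq : gibbsZ ρ β (G + w) - gibbsZ ρ β G - ((-β) • Jfun ρ β G) w
      = ∫ ω, (Real.exp (-β * (G + w) ω) - Real.exp (-β * G ω)
          + β * w ω * Real.exp (-β * G ω)) ∂ρ := by
    have h5 : ((-β) • Jfun ρ β G) w = -β * ∫ ω, w ω * Real.exp (-β * G ω) ∂ρ := by
      rw [ContinuousLinearMap.smul_apply, Jfun_apply, smul_eq_mul]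
    rw [h5, e1]; ring
  rw [heq]
  have hb := norm_integral_le_of_norm_le
    (integrable_const (β ^ 2 * ‖w‖ ^ 2 * Real.exp (|β| * ‖G‖)))
    ((key_ae G w hw1).mono fun ω h => by rwa [Real.norm_eq_abs])
  rw [integral_const, smul_eq_mul] at hb
  calc ‖∫ ω, (Real.exp (-β * (G + w) ω) - Real.exp (-β * G ω)
          + β * w ω * Real.exp (-β * G ω)) ∂ρ‖
      ≤ (ρ Set.univ).toReal * (β ^ 2 * ‖w‖ ^ 2 * Real.exp (|β| * ‖G‖)) := hb
    _ ≤ C * ‖w‖ * ‖w‖ := by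
        rw [hC]; nlinarith [norm_nonneg w, sq_nonneg (‖w‖ * β), Real.exp_pos (|β| * ‖G‖),
          ENNReal.toReal_nonneg (a := ρ Set.univ), sq_nonneg ‖w‖]
    _ ≤ C * (c / C) * ‖w‖ := by
        apply mul_le_mul_of_nonneg_right _ (norm_nonneg w)
        exact mul_le_mul_of_nonneg_left hw2 hCpos.le
    _ = c * ‖w‖ := by field_simp

lemma hasFDerivAt_J (G : Lp ℝ ⊤ ρ) :
    HasFDerivAt (fun G' => Jfun ρ β G') ((-β) • Bfun ρ β G) G := by
  rw [hasFDerivAt_iff_isLittleO_nhds_zero, Asymptotics.isLittleO_iff]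
  intro c hc
  set C : ℝ := β ^ 2 * Real.exp (|β| * ‖G‖) * (ρ Set.univ).toReal + 1 with hC
  have hCpos : 0 < C := by positivity
  have hδ : 0 < min (|β| + 1)⁻¹ (c / C) := lt_min (by positivity) (by positivity)
  filter_upwards [Metric.ball_mem_nhds (0 : Lp ℝ ⊤ ρ) hδ] with w hwmem
  rw [mem_ball_zero_iff] at hwmem
  have hw1 : |β| * ‖w‖ ≤ 1 := by
    have h1 : ‖w‖ ≤ (|β| + 1)⁻¹ := (lt_of_lt_of_le hwmem (min_le_left _ _)).le
    calc |β| * ‖w‖ ≤ (|β| + 1) * (|β| + 1)⁻¹ := by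
          apply mul_le_mul (by linarith [abs_nonneg β]) h1 (norm_nonneg _) (by positivity)
      _ = 1 := mul_inv_cancel₀ (by positivity)
  have hw2 : ‖w‖ ≤ c / C := (lt_of_lt_of_le hwmem (min_le_right _ _)).le
  refine ContinuousLinearMap.opNorm_le_bound _ (by positivity) fun v => ?_
  have happ : (Jfun ρ β (G + w) - Jfun ρ β G - ((-β) • Bfun ρ β G) w) v
      = ∫ ω, v ω * (Real.exp (-β * (G + w) ω) - Real.exp (-β * G ω)
          + β * w ω * Real.exp (-β * G ω)) ∂ρ := by
    have h5 : (((-β) • Bfun ρ β G) w) v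
        = -β * ∫ ω, w ω * v ω * Real.exp (-β * G ω) ∂ρ := by
      rw [ContinuousLinearMap.smul_apply, ContinuousLinearMap.smul_apply, Bfun_apply,
        smul_eq_mul]
    have e1 : (∫ ω, v ω * (Real.exp (-β * (G + w) ω) - Real.exp (-β * G ω)
            + β * w ω * Real.exp (-β * G ω)) ∂ρ)
        = ((∫ ω, v ω * Real.exp (-β * (G + w) ω) ∂ρ)
            - ∫ ω, v ω * Real.exp (-β * G ω) ∂ρ)
          + β * ∫ ω, w ω * v ω * Real.exp (-β * G ω) ∂ρ := by
      calc (∫ ω, v ω * (Real.exp (-β * (G + w) ω) - Real.exp (-β * G ω)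
              + β * w ω * Real.exp (-β * G ω)) ∂ρ)
          = ∫ ω, ((v ω * Real.exp (-β * (G + w) ω) - v ω * Real.exp (-β * G ω))
              + β * (w ω * v ω * Real.exp (-β * G ω))) ∂ρ :=
            integral_congr_ae (Filter.Eventually.of_forall fun ω => by ring)
        _ = (∫ ω, (v ω * Real.exp (-β * (G + w) ω) - v ω * Real.exp (-β * G ω)) ∂ρ)
              + ∫ ω, β * (w ω * v ω * Real.exp (-β * G ω)) ∂ρ :=
            integral_add ((integ_mul_exp β (G + w) v).sub (integ_mul_exp β G v))
              ((integ_mul_mul_exp β G w v).const_mul β)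
        _ = _ := by
            rw [integral_sub (integ_mul_exp β (G + w) v) (integ_mul_exp β G v),
              integral_const_mul]
    rw [ContinuousLinearMap.sub_apply, ContinuousLinearMap.sub_apply, Jfun_apply, Jfun_apply,
      h5, e1]
    ring
  rw [happ]
  have hbd : ∀ᵐ ω ∂ρ, ‖v ω * (Real.exp (-β * (G + w) ω) - Real.exp (-β * G ω)
      + β * w ω * Real.exp (-β * G ω))‖
      ≤ ‖v‖ * (β ^ 2 * ‖w‖ ^ 2 * Real.exp (|β| * ‖G‖)) := by
    filter_upwards [key_ae G w hw1, ae_abs_le v] with ω h1 h2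
    rw [Real.norm_eq_abs, abs_mul]
    exact mul_le_mul h2 h1 (abs_nonneg _) (norm_nonneg _)
  have hb := norm_integral_le_of_norm_le
    (integrable_const (‖v‖ * (β ^ 2 * ‖w‖ ^ 2 * Real.exp (|β| * ‖G‖)))) hbd
  rw [integral_const, smul_eq_mul] at hb
  calc ‖∫ ω, v ω * (Real.exp (-β * (G + w) ω) - Real.exp (-β * G ω)
          + β * w ω * Real.exp (-β * G ω)) ∂ρ‖
      ≤ (ρ Set.univ).toReal * (‖v‖ * (β ^ 2 * ‖w‖ ^ 2 * Real.exp (|β| * ‖G‖))) := hb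
    _ ≤ C * ‖w‖ * ‖w‖ * ‖v‖ := by
        rw [hC]
        nlinarith [norm_nonneg w, norm_nonneg v, Real.exp_pos (|β| * ‖G‖),
          ENNReal.toReal_nonneg (a := ρ Set.univ), sq_nonneg ‖w‖,
          mul_nonneg (mul_nonneg (sq_nonneg β) (Real.exp_pos (|β| * ‖G‖)).le)
            (ENNReal.toReal_nonneg (a := ρ Set.univ)),
          mul_nonneg (norm_nonneg v) (sq_nonneg ‖w‖)]
    _ ≤ c * ‖w‖ * ‖v‖ := by
        have h6 : C * ‖w‖ ≤ c := by
          have := mul_le_mul_of_nonneg_left hw2 hCpos.le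
          calc C * ‖w‖ ≤ C * (c / C) := this
            _ = c := by field_simp
        have h7 : C * ‖w‖ * ‖w‖ ≤ c * ‖w‖ :=
          mul_le_mul_of_nonneg_right h6 (norm_nonneg w)
        exact mul_le_mul_of_nonneg_right h7 (norm_nonneg v)

noncomputable def Xi1 (ρ : Measure Ω) [IsFiniteMeasure ρ] (β : ℝ) (G : Lp ℝ ⊤ ρ) :
    Lp ℝ ⊤ ρ →L[ℝ] ℝ :=
  (-β * (gibbsZ ρ β G)⁻¹) • Jfun ρ β G

noncomputable def Xi2 (ρ : Measure Ω) [IsFiniteMeasure ρ] (β : ℝ) (G : Lp ℝ ⊤ ρ) :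
    Lp ℝ ⊤ ρ →L[ℝ] Lp ℝ ⊤ ρ →L[ℝ] ℝ :=
  (β ^ 2 * (gibbsZ ρ β G)⁻¹) • Bfun ρ β G
    - (β ^ 2 * ((gibbsZ ρ β G)⁻¹) ^ 2) • ((Jfun ρ β G).smulRight (Jfun ρ β G))

end gA

open gA

/-- The free-energy functional `Ξ(G) = ln ∫ e^{−βG} dρ` is twice Fréchet-differentiable on the
unit ball of `L^∞(Ω,ρ)` with `Ξ′(G)[u] = −β E_G[u]`,
`Ξ″(G)[u][v] = β²(E_G[uv] − E_G[u]E_G[v])`, `‖Ξ′(G)‖ ≤ β` and `‖Ξ″(G)‖ ≤ 2β²`. -/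
theorem gibbs_free_energy_derivatives {Ω : Type*} [MeasurableSpace Ω] (ρ : Measure Ω)
    [IsFiniteMeasure ρ] (hρ : ρ ≠ 0) (β : ℝ) (hβ : 0 < β) :
    ∃ Ξ' : Lp ℝ ⊤ ρ → (Lp ℝ ⊤ ρ →L[ℝ] ℝ),
      ∃ Ξ'' : Lp ℝ ⊤ ρ → (Lp ℝ ⊤ ρ →L[ℝ] Lp ℝ ⊤ ρ →L[ℝ] ℝ),
        ∀ G ∈ Metric.closedBall (0 : Lp ℝ ⊤ ρ) 1,
          HasFDerivWithinAt (fun G' : Lp ℝ ⊤ ρ => Real.log (gibbsZ ρ β G')) (Ξ' G)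
              (Metric.closedBall 0 1) G ∧
            HasFDerivWithinAt Ξ' (Ξ'' G) (Metric.closedBall 0 1) G ∧
            (∀ u : Lp ℝ ⊤ ρ, Ξ' G u = -β * gibbsExp ρ β G (fun ω => u ω)) ∧
            (∀ u v : Lp ℝ ⊤ ρ, Ξ'' G u v =
              β ^ 2 * (gibbsExp ρ β G (fun ω => u ω * v ω) -
                gibbsExp ρ β G (fun ω => u ω) * gibbsExp ρ β G (fun ω => v ω))) ∧
            ‖Ξ' G‖ ≤ β ∧ ‖Ξ'' G‖ ≤ 2 * β ^ 2 := by
  refine ⟨Xi1 ρ β, Xi2 ρ β, fun G _ => ?_⟩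
  have hZpos := Z_pos hρ β G
  have hZne : gibbsZ ρ β G ≠ 0 := hZpos.ne'
  have hZ := hasFDerivAt_Z (β := β) G
  constructor
  · -- first derivative
    have hlog := (Real.hasDerivAt_log hZne).comp_hasFDerivAt G hZ
    have : (gibbsZ ρ β G)⁻¹ • ((-β) • Jfun ρ β G) = Xi1 ρ β G := by
      rw [smul_smul, Xi1, mul_comm]
    rw [this] at hlog
    exact hlog.hasFDerivWithinAt
  refine ⟨?_, ?_, ?_, ?_, ?_⟩
  · -- second derivative
    have hinv := (hasDerivAt_inv hZne).comp_hasFDerivAt G hZ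
    have hc : HasFDerivAt (fun G' => -β * (gibbsZ ρ β G')⁻¹)
        ((-β) • ((-((gibbsZ ρ β G) ^ 2)⁻¹) • ((-β) • Jfun ρ β G))) G := hinv.const_mul (-β)
    have hs := hc.smul (hasFDerivAt_J (β := β) G)
    have hfun : ((fun G' => -β * (gibbsZ ρ β G')⁻¹) • fun G' => Jfun ρ β G') = Xi1 ρ β := rfl
    rw [hfun] at hs
    have hder : (-β * (gibbsZ ρ β G)⁻¹) • ((-β) • Bfun ρ β G)
        + ((-β) • ((-((gibbsZ ρ β G) ^ 2)⁻¹) • ((-β) • Jfun ρ β G))).smulRight (Jfun ρ β G)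
        = Xi2 ρ β G := by
      refine ContinuousLinearMap.ext fun w => ContinuousLinearMap.ext fun v => ?_
      simp only [Xi2, ContinuousLinearMap.add_apply, ContinuousLinearMap.sub_apply,
        ContinuousLinearMap.smul_apply, ContinuousLinearMap.smulRight_apply,
        smul_eq_mul, inv_pow]
      ring
    rw [hder] at hs
    exact hs.hasFDerivWithinAt
  · intro u
    simp only [Xi1, ContinuousLinearMap.smul_apply, smul_eq_mul, Jfun_apply, gibbsExp]
    ring
  · intro u v
    simp only [Xi2, ContinuousLinearMap.sub_apply, ContinuousLinearMap.smul_apply,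
      ContinuousLinearMap.smulRight_apply, smul_eq_mul, Jfun_apply, Bfun_apply, gibbsExp]
    ring
  · -- norm of first derivative
    refine ContinuousLinearMap.opNorm_le_bound _ hβ.le fun u => ?_
    rw [Xi1, ContinuousLinearMap.smul_apply, smul_eq_mul, Real.norm_eq_abs, abs_mul]
    have h1 : |(-β * (gibbsZ ρ β G)⁻¹)| = β * (gibbsZ ρ β G)⁻¹ := by
      rw [abs_mul, abs_neg, abs_of_pos hβ, abs_of_pos (inv_pos.2 hZpos)]
    rw [h1]
    calc β * (gibbsZ ρ β G)⁻¹ * ‖(Jfun ρ β G) u‖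
        ≤ β * (gibbsZ ρ β G)⁻¹ * (‖u‖ * gibbsZ ρ β G) := by
          gcongr
          rw [Real.norm_eq_abs, Jfun_apply]
          exact J_bound β G u
      _ = β * ‖u‖ := by field_simp
  · -- norm of second derivative
    refine ContinuousLinearMap.opNorm_le_bound _ (by positivity) fun u => ?_
    refine ContinuousLinearMap.opNorm_le_bound _ (by positivity) fun v => ?_
    simp only [Xi2, ContinuousLinearMap.sub_apply, ContinuousLinearMap.smul_apply,
      ContinuousLinearMap.smulRight_apply, smul_eq_mul, Real.norm_eq_abs]
    have hB := B_bound β G u v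
    have hJu := J_bound β G u
    have hJv := J_bound β G v
    rw [← Jfun_apply (ρ := ρ)] at hJu hJv
    rw [← Bfun_apply (ρ := ρ)] at hB
    set Z := gibbsZ ρ β G with hZdef
    have hZinv : (0:ℝ) < Z⁻¹ := inv_pos.2 hZpos
    calc |β ^ 2 * Z⁻¹ * (Bfun ρ β G) u v - β ^ 2 * Z⁻¹ ^ 2 * ((Jfun ρ β G) u * (Jfun ρ β G) v)|
        ≤ |β ^ 2 * Z⁻¹ * (Bfun ρ β G) u v| + |β ^ 2 * Z⁻¹ ^ 2 * ((Jfun ρ β G) u * (Jfun ρ β G) v)| :=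
          abs_sub _ _
      _ = β ^ 2 * Z⁻¹ * |(Bfun ρ β G) u v|
          + β ^ 2 * Z⁻¹ ^ 2 * (|(Jfun ρ β G) u| * |(Jfun ρ β G) v|) := by
          simp only [abs_mul, abs_pow, abs_of_pos hβ, abs_of_pos hZinv]
          try ring
      _ ≤ β ^ 2 * Z⁻¹ * (Z * ‖u‖ * ‖v‖)
          + β ^ 2 * Z⁻¹ ^ 2 * ((‖u‖ * Z) * (‖v‖ * Z)) := by
          gcongr <;> first | positivity | exact hB | exact hJu | exact hJv
      _ = 2 * β ^ 2 * ‖u‖ * ‖v‖ := by field_simp; ring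
end

section
/- Let (Ω, ρ) be a finite measure space with ρ(Ω) > 0, let 𝒳 be a measurable space, let ℓ : Ω × 𝒳 → [0,1] be measurable, let β > 0, and let H(ω, x) = (1/n) Σ_{i=1}ⁿ ℓ(ω, x_i). Define the free energy Λ : 𝒳ⁿ → ℝ by Λ(x) = ln ∫_Ω e^{−β·H(ω,x)} dρ(ω). Then M(Λ) ≤ β/n and J(Λ) ≤ 2β²/n; that is, Λ has (β, 2β²)-weak interactions. -/
open MeasureTheory ProbabilityTheory

section helpers
variable {Ω : Type*} [MeasurableSpace Ω] {ρ : Measure Ω} [IsFiniteMeasure ρ]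

lemma int_bdd {f : Ω → ℝ} (hf : Measurable f) {C : ℝ} (h : ∀ ω, |f ω| ≤ C) :
    Integrable f ρ :=
  (integrable_const C).mono' hf.aestronglyMeasurable
    (Filter.Eventually.of_forall fun ω => by simpa using h ω)

lemma int_exp_pos (hρ : ρ ≠ 0) {f : Ω → ℝ} {C : ℝ} (h : ∀ ω, -C ≤ f ω)
    (hint : Integrable (fun ω => Real.exp (f ω)) ρ) :
    0 < ∫ ω, Real.exp (f ω) ∂ρ := by
  have h0 : 0 < (ρ Set.univ).toReal :=
    ENNReal.toReal_pos (Measure.measure_univ_pos.mpr hρ).ne' (measure_ne_top ρ _)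
  calc (0:ℝ) < Real.exp (-C) * (ρ Set.univ).toReal := by positivity
    _ = ∫ _ω, Real.exp (-C) ∂ρ := by rw [integral_const, smul_eq_mul, mul_comm]; rfl
    _ ≤ ∫ ω, Real.exp (f ω) ∂ρ :=
        integral_mono (integrable_const _) hint (fun ω => Real.exp_le_exp.2 (h ω))

lemma hasDerivAt_integral_exp {A B θ : Ω → ℝ} (hA : Measurable A) (hB : Measurable B)
    (hθ : Measurable θ) {CA CB c : ℝ} (hCA : 0 ≤ CA) (hc : 0 ≤ c)
    (hAb : ∀ ω, |A ω| ≤ CA) (hBb : ∀ ω, |B ω| ≤ CB) (hθb : ∀ ω, |θ ω| ≤ c) (r₀ : ℝ) :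
    HasDerivAt (fun r => ∫ ω, A ω * Real.exp (B ω + r * θ ω) ∂ρ)
      (∫ ω, A ω * θ ω * Real.exp (B ω + r₀ * θ ω) ∂ρ) r₀ := by
  have hmeas : ∀ r : ℝ, AEStronglyMeasurable (fun ω => A ω * Real.exp (B ω + r * θ ω)) ρ :=
    fun r => (hA.mul ((hB.add (hθ.const_mul r)).exp)).aestronglyMeasurable
  have hexp_bd : ∀ (r : ℝ), ∀ ω, r ∈ Metric.ball r₀ 1 →
      Real.exp (B ω + r * θ ω) ≤ Real.exp (CB + (|r₀| + 1) * c) := by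
    intro r ω hr
    have h1 : |r - r₀| < 1 := by simpa [Real.dist_eq] using Metric.mem_ball.mp hr
    have h2 : |r| ≤ |r₀| + 1 := by
      calc |r| = |r₀ + (r - r₀)| := by ring_nf
        _ ≤ |r₀| + |r - r₀| := abs_add_le _ _
        _ ≤ |r₀| + 1 := by linarith
    have h3 : r * θ ω ≤ (|r₀| + 1) * c := by
      calc r * θ ω ≤ |r * θ ω| := le_abs_self _
        _ = |r| * |θ ω| := abs_mul _ _
        _ ≤ (|r₀| + 1) * c := by
            apply mul_le_mul h2 (hθb ω) (abs_nonneg _) (by positivity)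
    exact Real.exp_le_exp.2 (by linarith [(abs_le.mp (hBb ω)).2])
  have H := hasDerivAt_integral_of_dominated_loc_of_deriv_le (μ := ρ) (x₀ := r₀) (s := Metric.ball r₀ 1)
    (F := fun r ω => A ω * Real.exp (B ω + r * θ ω))
    (F' := fun r ω => A ω * θ ω * Real.exp (B ω + r * θ ω))
    (bound := fun _ => CA * c * Real.exp (CB + (|r₀| + 1) * c)) (Metric.ball_mem_nhds r₀ one_pos)
    (Filter.Eventually.of_forall fun r => hmeas r)
    (int_bdd (hA.mul ((hB.add (hθ.const_mul r₀)).exp)) (C := CA * Real.exp (CB + |r₀| * c))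
      (fun ω => by
        rw [abs_mul, Real.abs_exp]
        apply mul_le_mul (hAb ω) ?_ (Real.exp_nonneg _)
          (le_trans (abs_nonneg _) (hAb ω))
        apply Real.exp_le_exp.2
        have := (abs_le.mp (hBb ω)).2
        have h3 : r₀ * θ ω ≤ |r₀| * c := by
          calc r₀ * θ ω ≤ |r₀ * θ ω| := le_abs_self _
            _ = |r₀| * |θ ω| := abs_mul _ _
            _ ≤ |r₀| * c := mul_le_mul_of_nonneg_left (hθb ω) (abs_nonneg _)
        linarith))
    ((hA.mul hθ).mul ((hB.add (hθ.const_mul r₀)).exp)).aestronglyMeasurable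
    (Filter.Eventually.of_forall fun ω r hr => by
      have h1 : ‖A ω * θ ω * Real.exp (B ω + r * θ ω)‖
          = |A ω| * |θ ω| * Real.exp (B ω + r * θ ω) := by
        rw [Real.norm_eq_abs, abs_mul, abs_mul, Real.abs_exp]
      rw [h1]
      apply mul_le_mul (mul_le_mul (hAb ω) (hθb ω) (abs_nonneg _)
        (le_trans (abs_nonneg _) (hAb ω))) (hexp_bd r ω hr) (Real.exp_nonneg _) (by positivity))
    (integrable_const _)
    (Filter.Eventually.of_forall fun ω r _ => by
      have h := (((hasDerivAt_mul_const (θ ω)).const_add (B ω)).exp).const_mul (A ω) (x := r)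
      have e : A ω * θ ω * Real.exp (B ω + r * θ ω) = A ω * (Real.exp (B ω + r * θ ω) * θ ω) := by
        ring
      rw [e]
      exact h)
  exact H.2
end helpers

section cov
variable {Ω : Type*} [MeasurableSpace Ω] {ρ : Measure Ω} [IsFiniteMeasure ρ]

lemma cov_bound {u φ ψ : Ω → ℝ} (hu : Measurable u) (hφ : Measurable φ) (hψ : Measurable ψ)
    {Cu c : ℝ} (hc : 0 ≤ c) (hupos : ∀ ω, 0 ≤ u ω) (hub : ∀ ω, u ω ≤ Cu)
    (hφb : ∀ ω, |φ ω| ≤ c) (hψb : ∀ ω, |ψ ω| ≤ c) (hI : 0 < ∫ ω, u ω ∂ρ) :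
    (∫ ω, ψ ω * φ ω * u ω ∂ρ) * (∫ ω, u ω ∂ρ)
      - (∫ ω, ψ ω * u ω ∂ρ) * (∫ ω, φ ω * u ω ∂ρ)
      ≤ 2 * c ^ 2 * (∫ ω, u ω ∂ρ) ^ 2 := by
  have hub' : ∀ ω, |u ω| ≤ Cu := fun ω => by
    rw [abs_of_nonneg (hupos ω)]; exact hub ω
  have hint_u : Integrable u ρ := int_bdd hu hub'
  have hint_φu : Integrable (fun ω => φ ω * u ω) ρ := by
    refine int_bdd (hφ.mul hu) (C := c * Cu) fun ω => by
      rw [abs_mul]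
      exact mul_le_mul (hφb ω) (hub' ω) (abs_nonneg _) hc
  have hint_ψu : Integrable (fun ω => ψ ω * u ω) ρ := by
    refine int_bdd (hψ.mul hu) (C := c * Cu) fun ω => by
      rw [abs_mul]
      exact mul_le_mul (hψb ω) (hub' ω) (abs_nonneg _) hc
  have hint_ψφu : Integrable (fun ω => ψ ω * φ ω * u ω) ρ := by
    refine int_bdd ((hψ.mul hφ).mul hu) (C := c * c * Cu) fun ω => by
      rw [abs_mul, abs_mul]
      refine mul_le_mul (mul_le_mul (hψb ω) (hφb ω) (abs_nonneg _) hc) (hub' ω)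
        (abs_nonneg _) (by positivity)
  set I := ∫ ω, u ω ∂ρ with hIdef
  set μ := (∫ ω, φ ω * u ω ∂ρ) / I with hμdef
  have hμ : |μ| ≤ c := by
    rw [hμdef, abs_div, abs_of_pos hI, div_le_iff₀ hI]
    have hnn := norm_integral_le_integral_norm (μ := ρ) (fun ω => φ ω * u ω)
    simp only [Real.norm_eq_abs] at hnn
    calc |∫ ω, φ ω * u ω ∂ρ| ≤ ∫ ω, |φ ω * u ω| ∂ρ := hnn
      _ ≤ ∫ ω, c * u ω ∂ρ := by
          refine integral_mono hint_φu.abs (hint_u.const_mul c) fun ω => ?_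
          rw [abs_mul, abs_of_nonneg (hupos ω)]
          exact mul_le_mul_of_nonneg_right (hφb ω) (hupos ω)
      _ = c * I := integral_const_mul c u
  have e1 : ∫ ω, (φ ω - μ) * ψ ω * u ω ∂ρ
      = (∫ ω, ψ ω * φ ω * u ω ∂ρ) - μ * ∫ ω, ψ ω * u ω ∂ρ := by
    calc ∫ ω, (φ ω - μ) * ψ ω * u ω ∂ρ
        = ∫ ω, (ψ ω * φ ω * u ω - μ * (ψ ω * u ω)) ∂ρ :=
          integral_congr_ae (Filter.Eventually.of_forall fun ω => by ring)
      _ = (∫ ω, ψ ω * φ ω * u ω ∂ρ) - μ * ∫ ω, ψ ω * u ω ∂ρ := by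
          rw [integral_sub hint_ψφu (hint_ψu.const_mul μ), integral_const_mul]
  have e2 : (∫ ω, ψ ω * φ ω * u ω ∂ρ) * I - (∫ ω, ψ ω * u ω ∂ρ) * (∫ ω, φ ω * u ω ∂ρ)
      = I * ∫ ω, (φ ω - μ) * ψ ω * u ω ∂ρ := by
    rw [e1]
    have : μ * I = ∫ ω, φ ω * u ω ∂ρ := by
      rw [hμdef]; field_simp
    linear_combination (∫ ω, ψ ω * u ω ∂ρ) * this
  rw [e2]
  have e3 : ∫ ω, (φ ω - μ) * ψ ω * u ω ∂ρ ≤ 2 * c ^ 2 * I := by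
    calc ∫ ω, (φ ω - μ) * ψ ω * u ω ∂ρ ≤ ∫ ω, 2 * c ^ 2 * u ω ∂ρ := by
          refine integral_mono ?_ (hint_u.const_mul _) fun ω => ?_
          · refine int_bdd (((hφ.sub measurable_const).mul hψ).mul hu)
              (C := 2 * c * c * Cu) fun ω => ?_
            have hCu : (0:ℝ) ≤ Cu := le_trans (abs_nonneg _) (hub' ω)
            rw [abs_mul, abs_mul]
            have h1 : |φ ω - μ| ≤ 2 * c := by
              calc |φ ω - μ| ≤ |φ ω| + |μ| := abs_sub _ _
                _ ≤ 2 * c := by linarith [hφb ω]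
            refine mul_le_mul (mul_le_mul h1 (hψb ω) (abs_nonneg _) (by linarith))
              (hub' ω) (abs_nonneg _) (by positivity)
          · have h1 : (φ ω - μ) * ψ ω ≤ 2 * c ^ 2 := by
              obtain ⟨ha1, ha2⟩ := abs_le.mp (hφb ω)
              obtain ⟨hb1, hb2⟩ := abs_le.mp (hψb ω)
              obtain ⟨hm1, hm2⟩ := abs_le.mp hμ
              nlinarith [mul_nonneg (by linarith : (0:ℝ) ≤ c - ψ ω)
                  (by linarith : (0:ℝ) ≤ 2 * c + (φ ω - μ)),
                mul_nonneg (by linarith : (0:ℝ) ≤ c + ψ ω)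
                  (by linarith : (0:ℝ) ≤ 2 * c - (φ ω - μ))]
            exact mul_le_mul_of_nonneg_right h1 (hupos ω)
      _ = 2 * c ^ 2 * I := integral_const_mul _ u
  nlinarith [mul_le_mul_of_nonneg_left e3 hI.le]
end cov

section key
variable {Ω : Type*} [MeasurableSpace Ω] {ρ : Measure Ω} [IsFiniteMeasure ρ]
variable {g φ ψ : Ω → ℝ} {Cg c : ℝ}

lemma exp_arg_meas (hg : Measurable g) (hφ : Measurable φ) (hψ : Measurable ψ) (s t : ℝ) :
    Measurable fun ω => g ω + s * φ ω + t * ψ ω :=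
  (hg.add (hφ.const_mul s)).add (hψ.const_mul t)

lemma exp_arg_bd (hgb : ∀ ω, |g ω| ≤ Cg) (hφb : ∀ ω, |φ ω| ≤ c) (hψb : ∀ ω, |ψ ω| ≤ c)
    (s t : ℝ) (ω : Ω) : |g ω + s * φ ω + t * ψ ω| ≤ Cg + |s| * c + |t| * c := by
  have h1 : |s * φ ω| ≤ |s| * c := by
    rw [abs_mul]; exact mul_le_mul_of_nonneg_left (hφb ω) (abs_nonneg s)
  have h2 : |t * ψ ω| ≤ |t| * c := by
    rw [abs_mul]; exact mul_le_mul_of_nonneg_left (hψb ω) (abs_nonneg t)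
  calc |g ω + s * φ ω + t * ψ ω| ≤ |g ω| + |s * φ ω| + |t * ψ ω| := abs_add_three _ _ _
    _ ≤ Cg + |s| * c + |t| * c := by
        have := hgb ω; linarith

lemma Nint (hg : Measurable g) (hφ : Measurable φ) (hψ : Measurable ψ)
    (hgb : ∀ ω, |g ω| ≤ Cg) (hφb : ∀ ω, |φ ω| ≤ c) (hψb : ∀ ω, |ψ ω| ≤ c) (s t : ℝ) :
    Integrable (fun ω => Real.exp (g ω + s * φ ω + t * ψ ω)) ρ := by
  refine int_bdd ((exp_arg_meas hg hφ hψ s t).exp)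
    (C := Real.exp (Cg + |s| * c + |t| * c)) fun ω => ?_
  rw [Real.abs_exp]
  exact Real.exp_le_exp.2 (abs_le.mp (exp_arg_bd hgb hφb hψb s t ω)).2

lemma Npos (hρ : ρ ≠ 0) (hg : Measurable g) (hφ : Measurable φ) (hψ : Measurable ψ)
    (hgb : ∀ ω, |g ω| ≤ Cg) (hφb : ∀ ω, |φ ω| ≤ c) (hψb : ∀ ω, |ψ ω| ≤ c) (s t : ℝ) :
    0 < ∫ ω, Real.exp (g ω + s * φ ω + t * ψ ω) ∂ρ :=
  int_exp_pos hρ (C := Cg + |s| * c + |t| * c)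
    (fun ω => (abs_le.mp (exp_arg_bd hgb hφb hψb s t ω)).1)
    (Nint hg hφ hψ hgb hφb hψb s t)

lemma hderiv_t (hg : Measurable g) (hφ : Measurable φ) (hψ : Measurable ψ) (hc : 0 ≤ c)
    (hgb : ∀ ω, |g ω| ≤ Cg) (hφb : ∀ ω, |φ ω| ≤ c) (hψb : ∀ ω, |ψ ω| ≤ c) (s t : ℝ) :
    HasDerivAt (fun t => ∫ ω, Real.exp (g ω + s * φ ω + t * ψ ω) ∂ρ)
      (∫ ω, ψ ω * Real.exp (g ω + s * φ ω + t * ψ ω) ∂ρ) t := by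
  have h := hasDerivAt_integral_exp (ρ := ρ) (A := fun _ : Ω => (1:ℝ))
    (B := fun ω => g ω + s * φ ω) (θ := ψ) measurable_const (hg.add (hφ.const_mul s)) hψ
    (CA := 1) zero_le_one hc (fun ω => by norm_num)
    (CB := Cg + |s| * c)
    (fun ω => by have := exp_arg_bd hgb hφb hψb s 0 (ω := ω); simpa using this)
    hψb t
  have e1 : ∀ r : ℝ, (∫ ω, (1:ℝ) * Real.exp (g ω + s * φ ω + r * ψ ω) ∂ρ)
      = ∫ ω, Real.exp (g ω + s * φ ω + r * ψ ω) ∂ρ := fun r => by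
    simp only [one_mul]
  have e2 : ∀ r : ℝ, (∫ ω, (1:ℝ) * ψ ω * Real.exp (g ω + s * φ ω + r * ψ ω) ∂ρ)
      = ∫ ω, ψ ω * Real.exp (g ω + s * φ ω + r * ψ ω) ∂ρ := fun r => by
    simp only [one_mul]
  simp only [e1, e2] at h
  exact h

lemma hderiv_s_gen {A : Ω → ℝ} {CA : ℝ} (hA : Measurable A) (hCA : 0 ≤ CA)
    (hAb : ∀ ω, |A ω| ≤ CA)
    (hg : Measurable g) (hφ : Measurable φ) (hψ : Measurable ψ) (hc : 0 ≤ c)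
    (hgb : ∀ ω, |g ω| ≤ Cg) (hφb : ∀ ω, |φ ω| ≤ c) (hψb : ∀ ω, |ψ ω| ≤ c) (s t : ℝ) :
    HasDerivAt (fun s => ∫ ω, A ω * Real.exp (g ω + s * φ ω + t * ψ ω) ∂ρ)
      (∫ ω, A ω * φ ω * Real.exp (g ω + s * φ ω + t * ψ ω) ∂ρ) s := by
  have h := hasDerivAt_integral_exp (ρ := ρ) (A := A)
    (B := fun ω => g ω + t * ψ ω) (θ := φ) hA (hg.add (hψ.const_mul t)) hφ
    hCA hc hAb
    (CB := Cg + |t| * c)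
    (fun ω => by have := exp_arg_bd hgb hφb hψb 0 t (ω := ω); simpa using this)
    hφb s
  have e1 : ∀ r : ℝ, (∫ ω, A ω * Real.exp (g ω + t * ψ ω + r * φ ω) ∂ρ)
      = ∫ ω, A ω * Real.exp (g ω + r * φ ω + t * ψ ω) ∂ρ := fun r =>
    integral_congr_ae (Filter.Eventually.of_forall fun ω => by
      show A ω * Real.exp (g ω + t * ψ ω + r * φ ω) = A ω * Real.exp (g ω + r * φ ω + t * ψ ω)
      rw [show g ω + t * ψ ω + r * φ ω = g ω + r * φ ω + t * ψ ω from by ring])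
  have e2 : ∀ r : ℝ, (∫ ω, A ω * φ ω * Real.exp (g ω + t * ψ ω + r * φ ω) ∂ρ)
      = ∫ ω, A ω * φ ω * Real.exp (g ω + r * φ ω + t * ψ ω) ∂ρ := fun r =>
    integral_congr_ae (Filter.Eventually.of_forall fun ω => by
      show A ω * φ ω * Real.exp (g ω + t * ψ ω + r * φ ω)
        = A ω * φ ω * Real.exp (g ω + r * φ ω + t * ψ ω)
      rw [show g ω + t * ψ ω + r * φ ω = g ω + r * φ ω + t * ψ ω from by ring])
  simp only [e1, e2] at h
  exact h

lemma key_lemma (hρ : ρ ≠ 0) (hg : Measurable g) (hφ : Measurable φ) (hψ : Measurable ψ)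
    (hc : 0 ≤ c) (hgb : ∀ ω, |g ω| ≤ Cg) (hφb : ∀ ω, |φ ω| ≤ c) (hψb : ∀ ω, |ψ ω| ≤ c) :
    Real.log (∫ ω, Real.exp (g ω + 1 * φ ω + 1 * ψ ω) ∂ρ)
      - Real.log (∫ ω, Real.exp (g ω + 0 * φ ω + 1 * ψ ω) ∂ρ)
      - Real.log (∫ ω, Real.exp (g ω + 1 * φ ω + 0 * ψ ω) ∂ρ)
      + Real.log (∫ ω, Real.exp (g ω + 0 * φ ω + 0 * ψ ω) ∂ρ) ≤ 2 * c ^ 2 := by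
  have hNpos : ∀ s t : ℝ, 0 < ∫ ω, Real.exp (g ω + s * φ ω + t * ψ ω) ∂ρ :=
    Npos (ρ := ρ) hρ hg hφ hψ hgb hφb hψb
  -- the outer function G
  set G : ℝ → ℝ := fun t => Real.log (∫ ω, Real.exp (g ω + 1 * φ ω + t * ψ ω) ∂ρ)
      - Real.log (∫ ω, Real.exp (g ω + 0 * φ ω + t * ψ ω) ∂ρ) with hGdef
  set G' : ℝ → ℝ := fun t =>
      (∫ ω, ψ ω * Real.exp (g ω + 1 * φ ω + t * ψ ω) ∂ρ)
        / (∫ ω, Real.exp (g ω + 1 * φ ω + t * ψ ω) ∂ρ)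
      - (∫ ω, ψ ω * Real.exp (g ω + 0 * φ ω + t * ψ ω) ∂ρ)
        / (∫ ω, Real.exp (g ω + 0 * φ ω + t * ψ ω) ∂ρ) with hG'def
  have hdG : ∀ t : ℝ, HasDerivAt G (G' t) t := fun t =>
    ((hderiv_t (ρ := ρ) hg hφ hψ hc hgb hφb hψb 1 t).log (hNpos 1 t).ne').sub
      ((hderiv_t (ρ := ρ) hg hφ hψ hc hgb hφb hψb 0 t).log (hNpos 0 t).ne')
  obtain ⟨ξ, hξIoo, hξ⟩ := exists_hasDerivAt_eq_slope G G' zero_lt_one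
    (fun x _ => (hdG x).continuousAt.continuousWithinAt) (fun x _ => hdG x)
  rw [sub_zero, div_one] at hξ
  have hgoal : G 1 - G 0 ≤ 2 * c ^ 2 := by
    rw [← hξ, hG'def]
    -- now the inner function K at level ξ
    set K : ℝ → ℝ := fun s =>
        (∫ ω, ψ ω * Real.exp (g ω + s * φ ω + ξ * ψ ω) ∂ρ)
          / (∫ ω, Real.exp (g ω + s * φ ω + ξ * ψ ω) ∂ρ) with hKdef
    set K' : ℝ → ℝ := fun s =>
        ((∫ ω, ψ ω * φ ω * Real.exp (g ω + s * φ ω + ξ * ψ ω) ∂ρ)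
            * (∫ ω, Real.exp (g ω + s * φ ω + ξ * ψ ω) ∂ρ)
          - (∫ ω, ψ ω * Real.exp (g ω + s * φ ω + ξ * ψ ω) ∂ρ)
            * (∫ ω, φ ω * Real.exp (g ω + s * φ ω + ξ * ψ ω) ∂ρ))
          / (∫ ω, Real.exp (g ω + s * φ ω + ξ * ψ ω) ∂ρ) ^ 2 with hK'def
    have hdK : ∀ s : ℝ, HasDerivAt K (K' s) s := fun s => by
      have h1 := hderiv_s_gen (ρ := ρ) (A := ψ) hψ hc hψb hg hφ hψ hc hgb hφb hψb s ξ
      have h0 := hderiv_s_gen (ρ := ρ) (A := fun _ : Ω => (1:ℝ)) measurable_const zero_le_one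
        (fun ω => by norm_num) hg hφ hψ hc hgb hφb hψb s ξ
      simp only [one_mul] at h0
      exact h1.div h0 (hNpos s ξ).ne'
    obtain ⟨η, hηIoo, hη⟩ := exists_hasDerivAt_eq_slope K K' zero_lt_one
      (fun x _ => (hdK x).continuousAt.continuousWithinAt) (fun x _ => hdK x)
    rw [sub_zero, div_one] at hη
    have hK'bd : K' η ≤ 2 * c ^ 2 := by
      rw [hK'def]
      have hcov := cov_bound (ρ := ρ) (u := fun ω => Real.exp (g ω + η * φ ω + ξ * ψ ω))
        ((exp_arg_meas hg hφ hψ η ξ).exp) hφ hψ hc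
        (fun ω => (Real.exp_nonneg _))
        (Cu := Real.exp (Cg + |η| * c + |ξ| * c))
        (fun ω => Real.exp_le_exp.2 (abs_le.mp (exp_arg_bd hgb hφb hψb η ξ ω)).2)
        hφb hψb (hNpos η ξ)
      rw [div_le_iff₀ (pow_pos (hNpos η ξ) 2)]
      calc _ ≤ 2 * c ^ 2 * (∫ ω, Real.exp (g ω + η * φ ω + ξ * ψ ω) ∂ρ) ^ 2 := hcov
        _ = _ := by ring
    calc G' ξ = K 1 - K 0 := rfl
      _ = K' η := hη.symm
      _ ≤ 2 * c ^ 2 := hK'bd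
  calc _ = G 1 - G 0 := by rw [hGdef]; ring
    _ ≤ 2 * c ^ 2 := hgoal

end key

section single
variable {Ω : Type*} [MeasurableSpace Ω] {ρ : Measure Ω} [IsFiniteMeasure ρ]
variable {g φ : Ω → ℝ} {Cg c : ℝ}

lemma single_bound (hρ : ρ ≠ 0) (hg : Measurable g) (hφ : Measurable φ)
    (hc : 0 ≤ c) (hgb : ∀ ω, |g ω| ≤ Cg) (hφb : ∀ ω, |φ ω| ≤ c) :
    Real.log (∫ ω, Real.exp (g ω + φ ω) ∂ρ) - Real.log (∫ ω, Real.exp (g ω) ∂ρ) ≤ c := by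
  have hgint : Integrable (fun ω => Real.exp (g ω)) ρ :=
    int_bdd hg.exp (C := Real.exp Cg) fun ω => by
      rw [Real.abs_exp]; exact Real.exp_le_exp.2 (abs_le.mp (hgb ω)).2
  have hgφint : Integrable (fun ω => Real.exp (g ω + φ ω)) ρ :=
    int_bdd (hg.add hφ).exp (C := Real.exp (Cg + c)) fun ω => by
      rw [Real.abs_exp]
      exact Real.exp_le_exp.2 (by linarith [(abs_le.mp (hgb ω)).2, (abs_le.mp (hφb ω)).2])
  have hgpos : 0 < ∫ ω, Real.exp (g ω) ∂ρ :=
    int_exp_pos hρ (C := Cg) (fun ω => (abs_le.mp (hgb ω)).1) hgint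
  have hgφpos : 0 < ∫ ω, Real.exp (g ω + φ ω) ∂ρ :=
    int_exp_pos hρ (C := Cg + c) (fun ω => by
      linarith [(abs_le.mp (hgb ω)).1, (abs_le.mp (hφb ω)).1]) hgφint
  have h1 : ∫ ω, Real.exp (g ω + φ ω) ∂ρ ≤ Real.exp c * ∫ ω, Real.exp (g ω) ∂ρ := by
    rw [← integral_const_mul]
    refine integral_mono hgφint (hgint.const_mul _) fun ω => ?_
    rw [← Real.exp_add]
    exact Real.exp_le_exp.2 (by linarith [(abs_le.mp (hφb ω)).2])
  calc Real.log (∫ ω, Real.exp (g ω + φ ω) ∂ρ) - Real.log (∫ ω, Real.exp (g ω) ∂ρ)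
      ≤ Real.log (Real.exp c * ∫ ω, Real.exp (g ω) ∂ρ) - Real.log (∫ ω, Real.exp (g ω) ∂ρ) := by
        have := Real.log_le_log hgφpos h1
        linarith
    _ = c := by
        rw [Real.log_mul (Real.exp_ne_zero c) hgpos.ne', Real.log_exp]; ring
end single


/-- The free energy `Λ(x) = ln ∫ e^{−β H(ω,x)} dρ(ω)`, `H(ω,x) = (1/n) Σ_i ℓ(ω, x_i)`, has
`(β, 2β²)`-weak interactions: `M(Λ) ≤ β/n` and `J(Λ) ≤ 2β²/n`. -/
theorem free_energy_weak_interactions {Ω 𝒳 : Type*} [MeasurableSpace Ω] [MeasurableSpace 𝒳]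
    [Nonempty 𝒳] {n : ℕ} (hn : 0 < n) (ρ : Measure Ω) [IsFiniteMeasure ρ] (hρ : ρ ≠ 0)
    (ℓ : Ω → 𝒳 → ℝ) (hℓmeas : Measurable (Function.uncurry ℓ))
    (hℓbd : ∀ ω x, ℓ ω x ∈ Set.Icc (0 : ℝ) 1) (β : ℝ) (hβ : 0 < β) :
    Msem (fun x : Fin n → 𝒳 =>
        Real.log (∫ ω, Real.exp (-β * ((1 / (n : ℝ)) * ∑ i, ℓ ω (x i))) ∂ρ)) ≤ β / n ∧
      Jsem (fun x : Fin n → 𝒳 =>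
        Real.log (∫ ω, Real.exp (-β * ((1 / (n : ℝ)) * ∑ i, ℓ ω (x i))) ∂ρ)) ≤
        2 * β ^ 2 / n := by
  classical
  have hn0 : (0:ℝ) < (n:ℝ) := by exact_mod_cast hn
  have hℓm : ∀ v : 𝒳, Measurable fun ω => ℓ ω v := fun v =>
    hℓmeas.comp (measurable_id.prodMk measurable_const)
  have hsum_meas : ∀ x : Fin n → 𝒳, Measurable fun ω => ∑ i, ℓ ω (x i) := fun x =>
    Finset.measurable_sum _ fun i _ => hℓm (x i)
  have hEmeas : ∀ x : Fin n → 𝒳,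
      Measurable fun ω => -β * ((1 / (n : ℝ)) * ∑ i, ℓ ω (x i)) := fun x =>
    ((hsum_meas x).const_mul _).const_mul _
  have hsum_bd : ∀ (x : Fin n → 𝒳) ω,
      0 ≤ (∑ i, ℓ ω (x i)) ∧ (∑ i, ℓ ω (x i)) ≤ (n:ℝ) := by
    intro x ω
    constructor
    · exact Finset.sum_nonneg fun i _ => (hℓbd ω (x i)).1
    · calc ∑ i, ℓ ω (x i) ≤ ∑ _i : Fin n, (1:ℝ) :=
          Finset.sum_le_sum fun i _ => (hℓbd ω (x i)).2
        _ = n := by simp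
  have hEbd : ∀ (x : Fin n → 𝒳) ω, |(-β * ((1 / (n : ℝ)) * ∑ i, ℓ ω (x i)))| ≤ β := by
    intro x ω
    obtain ⟨h1, h2⟩ := hsum_bd x ω
    have e1 : (1 / (n:ℝ)) * ∑ i, ℓ ω (x i) ≤ 1 := by
      have h := mul_le_mul_of_nonneg_left h2 (by positivity : (0:ℝ) ≤ 1/(n:ℝ))
      rw [one_div] at h ⊢
      rwa [inv_mul_cancel₀ hn0.ne'] at h
    have e0 : (0:ℝ) ≤ (1 / (n:ℝ)) * ∑ i, ℓ ω (x i) := by positivity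
    rw [abs_le]
    constructor <;> nlinarith
  -- sum over a single update
  have hsum_upd : ∀ (x : Fin n → 𝒳) (k : Fin n) (v : 𝒳) ω,
      ∑ i, ℓ ω (Function.update x k v i)
        = ℓ ω v + ∑ i ∈ Finset.univ \ {k}, ℓ ω (x i) := by
    intro x k v ω
    calc ∑ i, ℓ ω (Function.update x k v i)
        = ∑ i, Function.update (fun i => ℓ ω (x i)) k (ℓ ω v) i :=
          Finset.sum_congr rfl fun i _ => congrFun (Function.comp_update (ℓ ω) x k v) i
      _ = ℓ ω v + ∑ i ∈ Finset.univ \ {k}, ℓ ω (x i) :=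
          Finset.sum_update_of_mem (Finset.mem_univ k) _ _
  -- sum over a double update
  have hsum_upd2 : ∀ (x : Fin n → 𝒳) (k l : Fin n) (_ : l ≠ k) (a b : 𝒳) ω,
      ∑ i, ℓ ω (Function.update (Function.update x l a) k b i)
        = ℓ ω b + ℓ ω a + ∑ i ∈ (Finset.univ \ {k}) \ {l}, ℓ ω (x i) := by
    intro x k l hlk a b ω
    rw [hsum_upd _ k b ω]
    have hl : l ∈ Finset.univ \ ({k} : Finset (Fin n)) :=
      Finset.mem_sdiff.mpr ⟨Finset.mem_univ l, by simp [hlk]⟩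
    calc ℓ ω b + ∑ i ∈ Finset.univ \ {k}, ℓ ω (Function.update x l a i)
        = ℓ ω b + ∑ i ∈ Finset.univ \ {k},
            Function.update (fun i => ℓ ω (x i)) l (ℓ ω a) i := by
          exact congrArg (fun S => ℓ ω b + S)
            (Finset.sum_congr rfl fun i _ => congrFun (Function.comp_update (ℓ ω) x l a) i)
      _ = ℓ ω b + (ℓ ω a + ∑ i ∈ (Finset.univ \ {k}) \ {l}, ℓ ω (x i)) := by
          rw [Finset.sum_update_of_mem hl]
      _ = _ := by ring
  constructor
  · -- M bound
    have hβn : (0:ℝ) ≤ β / n := by positivity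
    unfold Msem partialDiff
    refine Real.iSup_le (fun k => Real.iSup_le (fun x => Real.iSup_le (fun y =>
      Real.iSup_le (fun y' => ?_) hβn) hβn) hβn) hβn
    simp only
    -- difference of logs
    set g : Ω → ℝ := fun ω => -β * ((1 / (n : ℝ)) * ∑ i, ℓ ω (Function.update x k y' i))
      with hgdef
    set φ : Ω → ℝ := fun ω => (β / (n:ℝ)) * (ℓ ω y' - ℓ ω y) with hφdef
    have hpt : ∀ ω, -β * ((1 / (n : ℝ)) * ∑ i, ℓ ω (Function.update x k y i))
        = g ω + φ ω := by
      intro ω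
      rw [hgdef, hφdef]
      simp only
      rw [hsum_upd x k y ω, hsum_upd x k y' ω]
      field_simp
      ring
    have e1 : (∫ ω, Real.exp (-β * ((1 / (n : ℝ)) * ∑ i, ℓ ω (Function.update x k y i))) ∂ρ)
        = ∫ ω, Real.exp (g ω + φ ω) ∂ρ :=
      integral_congr_ae (Filter.Eventually.of_forall fun ω => congrArg Real.exp (hpt ω))
    rw [e1]
    exact single_bound hρ (hEmeas (Function.update x k y'))
      (((hℓm y').sub (hℓm y)).const_mul _) hβn (Cg := β)
      (hEbd (Function.update x k y'))
      (fun ω => by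
        rw [hφdef]
        simp only [abs_mul]
        have h1 : |ℓ ω y' - ℓ ω y| ≤ 1 := by
          rw [abs_le]
          constructor <;> [linarith [(hℓbd ω y').1, (hℓbd ω y).2];
            linarith [(hℓbd ω y).1, (hℓbd ω y').2]]
        have h2 : |β / (n:ℝ)| = β / n := abs_of_pos (by positivity)
        nlinarith [abs_nonneg (β / (n:ℝ))])
  · -- J bound
    have hc : (0:ℝ) ≤ β / n := by positivity
    have hbd2 : (0:ℝ) ≤ 2 * (β/(n:ℝ))^2 := by positivity
    unfold Jsem partialDiff
    have hsup : (⨆ k : Fin n, ⨆ l : Fin n, ⨆ _ : l ≠ k, ⨆ x : Fin n → 𝒳, ⨆ z : 𝒳, ⨆ z' : 𝒳,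
        ⨆ y : 𝒳, ⨆ y' : 𝒳,
        ((fun x : Fin n → 𝒳 =>
            Real.log (∫ ω, Real.exp (-β * ((1 / (n : ℝ)) * ∑ i, ℓ ω (x i))) ∂ρ))
              (Function.update (Function.update x l z) k y)
          - (fun x : Fin n → 𝒳 =>
            Real.log (∫ ω, Real.exp (-β * ((1 / (n : ℝ)) * ∑ i, ℓ ω (x i))) ∂ρ))
              (Function.update (Function.update x l z) k y')
          - ((fun x : Fin n → 𝒳 =>
            Real.log (∫ ω, Real.exp (-β * ((1 / (n : ℝ)) * ∑ i, ℓ ω (x i))) ∂ρ))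
              (Function.update (Function.update x l z') k y)
          - (fun x : Fin n → 𝒳 =>
            Real.log (∫ ω, Real.exp (-β * ((1 / (n : ℝ)) * ∑ i, ℓ ω (x i))) ∂ρ))
              (Function.update (Function.update x l z') k y'))))
        ≤ 2 * (β/(n:ℝ))^2 := by
      refine Real.iSup_le (fun k => Real.iSup_le (fun l => Real.iSup_le (fun hlk =>
        Real.iSup_le (fun x => Real.iSup_le (fun z => Real.iSup_le (fun z' =>
        Real.iSup_le (fun y => Real.iSup_le (fun y' => ?_) hbd2) hbd2) hbd2) hbd2)
        hbd2) hbd2) hbd2) hbd2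
      simp only
      set g : Ω → ℝ := fun ω =>
        -β * ((1 / (n : ℝ)) * ∑ i, ℓ ω (Function.update (Function.update x l z') k y' i))
        with hgdef
      set φ : Ω → ℝ := fun ω => (β / (n:ℝ)) * (ℓ ω y' - ℓ ω y) with hφdef
      set ψ : Ω → ℝ := fun ω => (β / (n:ℝ)) * (ℓ ω z' - ℓ ω z) with hψdef
      have habs1 : ∀ (a b : 𝒳) ω, |(β / (n:ℝ)) * (ℓ ω a - ℓ ω b)| ≤ β / n := by
        intro a b ω
        rw [abs_mul]
        have h1 : |ℓ ω a - ℓ ω b| ≤ 1 := by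
          rw [abs_le]
          constructor <;> [linarith [(hℓbd ω a).1, (hℓbd ω b).2];
            linarith [(hℓbd ω b).1, (hℓbd ω a).2]]
        have h2 : |β / (n:ℝ)| = β / n := abs_of_pos (by positivity)
        nlinarith [abs_nonneg (β / (n:ℝ))]
      have hpte11 : ∀ ω, -β * ((1 / (n : ℝ)) * ∑ i, ℓ ω (Function.update (Function.update x l z) k y i))
          = g ω + 1 * φ ω + 1 * ψ ω := by
        intro ω
        rw [hgdef, hφdef, hψdef]
        simp only
        rw [hsum_upd2 x k l hlk z y ω, hsum_upd2 x k l hlk z' y' ω]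
        field_simp
        ring
      have e11 : (∫ ω, Real.exp
            (-β * ((1 / (n : ℝ)) * ∑ i, ℓ ω (Function.update (Function.update x l z) k y i))) ∂ρ)
          = ∫ ω, Real.exp (g ω + 1 * φ ω + 1 * ψ ω) ∂ρ :=
        integral_congr_ae (Filter.Eventually.of_forall fun ω => congrArg Real.exp (hpte11 ω))
      have hpte01 : ∀ ω, -β * ((1 / (n : ℝ)) * ∑ i, ℓ ω (Function.update (Function.update x l z) k y' i))
          = g ω + 0 * φ ω + 1 * ψ ω := by
        intro ω
        rw [hgdef, hφdef, hψdef]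
        simp only
        rw [hsum_upd2 x k l hlk z y' ω, hsum_upd2 x k l hlk z' y' ω]
        field_simp
        ring
      have e01 : (∫ ω, Real.exp
            (-β * ((1 / (n : ℝ)) * ∑ i, ℓ ω (Function.update (Function.update x l z) k y' i))) ∂ρ)
          = ∫ ω, Real.exp (g ω + 0 * φ ω + 1 * ψ ω) ∂ρ :=
        integral_congr_ae (Filter.Eventually.of_forall fun ω => congrArg Real.exp (hpte01 ω))
      have hpte10 : ∀ ω, -β * ((1 / (n : ℝ)) * ∑ i, ℓ ω (Function.update (Function.update x l z') k y i))
          = g ω + 1 * φ ω + 0 * ψ ω := by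
        intro ω
        rw [hgdef, hφdef, hψdef]
        simp only
        rw [hsum_upd2 x k l hlk z' y ω, hsum_upd2 x k l hlk z' y' ω]
        field_simp
        ring
      have e10 : (∫ ω, Real.exp
            (-β * ((1 / (n : ℝ)) * ∑ i, ℓ ω (Function.update (Function.update x l z') k y i))) ∂ρ)
          = ∫ ω, Real.exp (g ω + 1 * φ ω + 0 * ψ ω) ∂ρ :=
        integral_congr_ae (Filter.Eventually.of_forall fun ω => congrArg Real.exp (hpte10 ω))
      have hpte00 : ∀ ω, -β * ((1 / (n : ℝ)) * ∑ i, ℓ ω (Function.update (Function.update x l z') k y' i))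
          = g ω + 0 * φ ω + 0 * ψ ω := by
        intro ω
        rw [hgdef, hφdef, hψdef]
        simp only
        rw [hsum_upd2 x k l hlk z' y' ω]
        ring
      have e00 : (∫ ω, Real.exp
            (-β * ((1 / (n : ℝ)) * ∑ i, ℓ ω (Function.update (Function.update x l z') k y' i))) ∂ρ)
          = ∫ ω, Real.exp (g ω + 0 * φ ω + 0 * ψ ω) ∂ρ :=
        integral_congr_ae (Filter.Eventually.of_forall fun ω => congrArg Real.exp (hpte00 ω))
      rw [e11, e01, e10, e00]
      have := key_lemma (ρ := ρ) hρ (g := g) (φ := φ) (ψ := ψ)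
        (hEmeas (Function.update (Function.update x l z') k y'))
        (((hℓm y').sub (hℓm y)).const_mul _)
        (((hℓm z').sub (hℓm z)).const_mul _)
        hc (Cg := β) (hEbd (Function.update (Function.update x l z') k y'))
        (fun ω => habs1 y' y ω) (fun ω => habs1 z' z ω)
      linarith
    calc (n:ℝ) * _ ≤ (n:ℝ) * (2 * (β/(n:ℝ))^2) :=
          mul_le_mul_of_nonneg_left hsup (by positivity)
      _ = 2 * β ^ 2 / n := by field_simp
end
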